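/- arXiv:2104.04002 — 6 statements merged into one kernel-verified Lean document; each statement's English description precedes it below -/
import Mathlib

section
/- Let E be a Dedekind complete vector lattice, F a universal completion of E, (P_k)_{k≥1} a sequence of band projections on E with P_k ↑ I, and (x_n)_{n≥1} a sequence in E. If for each k the sequence (P_k x_n)_{n≥1} converges in order in E, then (x_n)_{n≥1} converges in order in F. -/
set_option linter.unusedSectionVars false
set_option maxHeartbeats 1000000

universe u

def OrderConvNet {E : Type u} [Lattice E] [AddCommGroup E] {A : Type*} [Preorder A]
    (x : A → E) (l : E) : Prop :=
  ∃ (B : Type u) (leB : B → B → Prop) (y : B → E),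
    Nonempty B ∧
    (∀ b, leB b b) ∧
    (∀ b₁ b₂ b₃, leB b₁ b₂ → leB b₂ b₃ → leB b₁ b₃) ∧
    (∀ b₁ b₂, ∃ b₃, leB b₁ b₃ ∧ leB b₂ b₃) ∧
    (∀ b₁ b₂, leB b₁ b₂ → y b₂ ≤ y b₁) ∧
    IsGLB (Set.range y) 0 ∧
    (∀ b, ∃ a₀, ∀ a, a₀ ≤ a → |x a - l| ≤ y b)

def DedekindComplete (E : Type*) [Lattice E] : Prop :=
  ∀ S : Set E, S.Nonempty → BddAbove S → ∃ s, IsLUB S s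

def LaterallyComplete (E : Type*) [Lattice E] [AddCommGroup E] : Prop :=
  ∀ S : Set E, (∀ x ∈ S, 0 ≤ x) → (S.Pairwise fun a b => a ⊓ b = 0) → ∃ s, IsLUB S s

def IsBandProjection {E : Type*} [Lattice E] [AddCommGroup E] [Module ℝ E]
    (P : E →ₗ[ℝ] E) : Prop :=
  (∀ x, P (P x) = P x) ∧ ∀ x : E, 0 ≤ x → 0 ≤ P x ∧ P x ≤ x

section Aux
variable {α : Type*} [Lattice α] [AddCommGroup α] [CovariantClass α α (· + ·) (· ≤ ·)]

lemma aux_posPart_sub (s c : α) : (s - c)⁺ = c ⊔ s - c := by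
  rw [posPart_def, sup_sub, sub_self, sup_comm]

lemma aux_inf_decomp (s c : α) : c ⊓ s + (s - c)⁺ = s := by
  rw [aux_posPart_sub, ← add_sub_assoc, inf_add_sup]
  abel

lemma aux_inf_lub_le {S : Set α} {σ c d : α} (hS : IsLUB S σ)
    (h : ∀ s ∈ S, c ⊓ s ≤ d) : c ⊓ σ ≤ d := by
  have hub : ∀ s ∈ S, s ≤ d + (σ - c)⁺ := by
    intro s hs
    calc s = c ⊓ s + (s - c)⁺ := (aux_inf_decomp s c).symm
    _ ≤ d + (σ - c)⁺ := add_le_add (h s hs) (posPart_mono (sub_le_sub_right (hS.1 hs) c))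
  have h2 : σ ≤ d + (σ - c)⁺ := hS.2 hub
  have h3 := aux_inf_decomp σ c
  have h4 : c ⊓ σ = σ - (σ - c)⁺ := eq_sub_of_add_eq h3
  rw [h4]
  rwa [← sub_le_iff_le_add] at h2

lemma aux_inf_add_le {p q r : α} (hp : 0 ≤ p) (hq : 0 ≤ q) (hr : 0 ≤ r) :
    (p + q) ⊓ r ≤ p ⊓ r + q ⊓ r := by
  have h1 : (p + q) ⊓ r - q ⊓ r = ((p + q) ⊓ r - q) ⊔ ((p + q) ⊓ r - r) := by
    rw [sub_inf]
  have h2 : (p + q) ⊓ r - q ≤ p := by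
    have h := inf_le_left (a := p + q) (b := r)
    rw [sub_le_iff_le_add]
    exact h.trans (by rw [add_comm p q])
  have h3 : (p + q) ⊓ r - r ≤ 0 := sub_nonpos.2 inf_le_right
  have h4 : (p + q) ⊓ r - q ⊓ r ≤ p := by rw [h1]; exact sup_le h2 (h3.trans hp)
  have h5 : (p + q) ⊓ r - q ⊓ r ≤ r := (sub_le_self _ (le_inf hq hr)).trans inf_le_right
  have h6 : (p + q) ⊓ r - q ⊓ r ≤ p ⊓ r := le_inf h4 h5
  rw [sub_le_iff_le_add] at h6
  exact h6.trans (by rw [add_comm])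

lemma aux_add_eq_sup {p q : α} (h : p ⊓ q = 0) : p + q = p ⊔ q := by
  have h2 := inf_add_sup p q
  rw [h, zero_add] at h2
  exact h2.symm

lemma aux_posPart_sub_eq (x y : α) : (x - y)⁺ = x - x ⊓ y := by
  rw [aux_posPart_sub, sup_comm, sub_eq_sub_iff_add_eq_add, add_comm (x ⊔ y) (x ⊓ y), inf_add_sup,
    add_comm]

lemma aux_posPart_add {a b : α} (h : |a| ⊓ |b| = 0) : (a + b)⁺ = a⁺ + b⁺ := by
  have hab : ∀ u v : α, u ≤ |a| → v ≤ |b| → 0 ≤ u → 0 ≤ v → u ⊓ v = 0 := by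
    intro u v hu hv hu0 hv0
    have le1 : u ⊓ v ≤ |a| ⊓ |b| := inf_le_inf hu hv
    have le2 : 0 ≤ u ⊓ v := le_inf hu0 hv0
    exact le_antisymm (le1.trans h.le) le2
  have hx : (a⁺ + b⁺) ⊓ (a⁻ + b⁻) = 0 := by
    have k1 : (a⁺ + b⁺) ⊓ (a⁻ + b⁻) ≤ a⁺ ⊓ (a⁻ + b⁻) + b⁺ ⊓ (a⁻ + b⁻) :=
      aux_inf_add_le (posPart_nonneg a) (posPart_nonneg b)
        (add_nonneg (negPart_nonneg a) (negPart_nonneg b))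
    have k2 : a⁺ ⊓ (a⁻ + b⁻) ≤ a⁺ ⊓ a⁻ + a⁺ ⊓ b⁻ := by
      have := aux_inf_add_le (negPart_nonneg a) (negPart_nonneg b) (posPart_nonneg a)
      rw [inf_comm]
      exact this.trans (add_le_add (inf_le_inf_right _ le_rfl |>.trans (by rw [inf_comm]))
        (by rw [inf_comm]))
    have k3 : b⁺ ⊓ (a⁻ + b⁻) ≤ b⁺ ⊓ a⁻ + b⁺ ⊓ b⁻ := by
      have := aux_inf_add_le (negPart_nonneg a) (negPart_nonneg b) (posPart_nonneg b)
      rw [inf_comm]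
      exact this.trans (add_le_add (by rw [inf_comm]) (by rw [inf_comm]))
    have pa : (a:α)⁺ ≤ |a| := by
      rw [← posPart_add_negPart a]; exact le_add_of_nonneg_right (negPart_nonneg a)
    have pb : (b:α)⁺ ≤ |b| := by
      rw [← posPart_add_negPart b]; exact le_add_of_nonneg_right (negPart_nonneg b)
    have na : (a:α)⁻ ≤ |a| := by
      rw [← posPart_add_negPart a]; exact le_add_of_nonneg_left (posPart_nonneg a)
    have nb : (b:α)⁻ ≤ |b| := by
      rw [← posPart_add_negPart b]; exact le_add_of_nonneg_left (posPart_nonneg b)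
    have z1 : (a:α)⁺ ⊓ a⁻ = 0 := posPart_inf_negPart_eq_zero a
    have z2 : (a:α)⁺ ⊓ b⁻ = 0 := hab _ _ pa nb (posPart_nonneg a) (negPart_nonneg b)
    have z3 : (b:α)⁺ ⊓ a⁻ = 0 := by
      rw [inf_comm]; exact hab _ _ na pb (negPart_nonneg a) (posPart_nonneg b)
    have z4 : (b:α)⁺ ⊓ b⁻ = 0 := posPart_inf_negPart_eq_zero b
    rw [z1, z2, add_zero] at k2
    rw [z3, z4, add_zero] at k3
    have upper : (a⁺ + b⁺) ⊓ (a⁻ + b⁻) ≤ 0 := by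
      refine k1.trans ?_
      have := add_le_add k2 k3
      rwa [add_zero] at this
    have lower : (0:α) ≤ (a⁺ + b⁺) ⊓ (a⁻ + b⁻) :=
      le_inf (add_nonneg (posPart_nonneg a) (posPart_nonneg b))
        (add_nonneg (negPart_nonneg a) (negPart_nonneg b))
    exact le_antisymm upper lower
  have e : a + b = (a⁺ + b⁺) - (a⁻ + b⁻) := by
    calc a + b = (a⁺ - a⁻) + (b⁺ - b⁻) := by rw [posPart_sub_negPart, posPart_sub_negPart]
    _ = (a⁺ + b⁺) - (a⁻ + b⁻) := by abel
  rw [e, aux_posPart_sub_eq, hx, sub_zero]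

lemma aux_negPart_add {a b : α} (h : |a| ⊓ |b| = 0) : (a + b)⁻ = a⁻ + b⁻ := by
  have h' : |(-a)| ⊓ |(-b)| = 0 := by rwa [abs_neg, abs_neg]
  have := aux_posPart_add h'
  rw [← neg_add] at this
  rwa [posPart_neg, posPart_neg, posPart_neg] at this


lemma aux_posPart_le_abs (a : α) : a⁺ ≤ |a| := by
  rw [← posPart_add_negPart a]; exact le_add_of_nonneg_right (negPart_nonneg a)

lemma aux_negPart_le_abs (a : α) : a⁻ ≤ |a| := by
  rw [← posPart_add_negPart a]; exact le_add_of_nonneg_left (posPart_nonneg a)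

lemma aux_sum_nonneg (f : ℕ → α) (h : ∀ m, 0 ≤ f m) (K : ℕ) :
    0 ≤ ∑ m ∈ Finset.range K, f m := by
  induction K with
  | zero => simp
  | succ K ih => rw [Finset.sum_range_succ]; exact add_nonneg ih (h K)

lemma aux_sum_le_sum {f g : ℕ → α} (h : ∀ m, f m ≤ g m) (K : ℕ) :
    ∑ m ∈ Finset.range K, f m ≤ ∑ m ∈ Finset.range K, g m := by
  induction K with
  | zero => simp
  | succ K ih =>
    rw [Finset.sum_range_succ, Finset.sum_range_succ]
    exact add_le_add ih (h K)

lemma aux_single_le_sum (f : ℕ → α) (h : ∀ m, 0 ≤ f m) (K : ℕ) :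
    ∀ j, j < K → f j ≤ ∑ m ∈ Finset.range K, f m := by
  induction K with
  | zero => omega
  | succ K ih =>
    intro j hj
    rw [Finset.sum_range_succ]
    rcases Nat.lt_succ_iff_lt_or_eq.1 hj with h1 | h1
    · exact (ih j h1).trans (le_add_of_nonneg_right (h K))
    · rw [h1]; exact le_add_of_nonneg_left (aux_sum_nonneg f h K)

lemma aux_abs_sum_le (f : ℕ → α) (K : ℕ) :
    |∑ m ∈ Finset.range K, f m| ≤ ∑ m ∈ Finset.range K, |f m| := by
  induction K with
  | zero => simp
  | succ K ih =>
    rw [Finset.sum_range_succ, Finset.sum_range_succ]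
    exact (abs_add_le _ _).trans (add_le_add ih le_rfl)

lemma aux_glb_add {f g : ℕ → α}
    (hf : Antitone f) (hg : Antitone g)
    (hfp : ∀ c, (∀ b, c ≤ f b) → c ≤ 0) (hgp : ∀ c, (∀ b, c ≤ g b) → c ≤ 0) :
    ∀ c, (∀ b, c ≤ f b + g b) → c ≤ 0 := by
  intro c hc
  have step : ∀ b', c - f b' ≤ 0 := by
    intro b'
    refine hgp _ (fun b => ?_)
    rcases le_total b' b with hb | hb
    · have h1 : c - f b ≤ g b := sub_le_iff_le_add.2 ((hc b).trans_eq (add_comm _ _))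
      exact (sub_le_sub_left (hf hb) c).trans h1
    · have h1 : c - f b' ≤ g b' := sub_le_iff_le_add.2 ((hc b').trans_eq (add_comm _ _))
      exact h1.trans (hg hb)
  exact hfp c (fun b' => sub_nonpos.1 (step b'))

lemma aux_rearr {uu vv ww zz dd : α}
    (h : uu ≤ zz + ww + vv + dd) : uu - vv - ww - zz ≤ dd := by
  rw [sub_le_iff_le_add, sub_le_iff_le_add, sub_le_iff_le_add]
  exact h.trans_eq (by abel)

lemma aux_rearr2 {vv zz uu ww dd : α}
    (h : vv ≤ zz + (uu - ww) + dd) : ww - (uu - vv) - zz ≤ dd := by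
  have h' : vv - (zz + (uu - ww) + dd) ≤ 0 := sub_nonpos.2 h
  have e : ww - (uu - vv) - zz - dd = vv - (zz + (uu - ww) + dd) := by abel
  have h2 : ww - (uu - vv) - zz - dd ≤ 0 := e ▸ h'
  exact sub_nonpos.1 h2

end Aux

section OCN
variable {E : Type u} [Lattice E] [AddCommGroup E] [CovariantClass E E (· + ·) (· ≤ ·)]

lemma ocn_shift {f : ℕ → E} {l : E} (h : OrderConvNet f l) :
    OrderConvNet (fun n => f n - l) (0 : E) := by
  obtain ⟨B, leB, y, h1, h2, h3, h4, h5, h6, h7⟩ := h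
  refine ⟨B, leB, y, h1, h2, h3, h4, h5, h6, fun b => ?_⟩
  obtain ⟨a₀, ha⟩ := h7 b
  exact ⟨a₀, fun a haa => by simpa using ha a haa⟩

lemma ocn_unique {f : ℕ → E} {l l' : E} (h : OrderConvNet f l) (h' : OrderConvNet f l') :
    l = l' := by
  obtain ⟨B, leB, y, hne, _, _, _, _, hglb, hdom⟩ := h
  obtain ⟨B', leB', y', hne', _, _, _, _, hglb', hdom'⟩ := h'
  have key : ∀ b b', |l - l'| ≤ y b + y' b' := by
    intro b b'
    obtain ⟨a₀, ha⟩ := hdom b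
    obtain ⟨a₁, ha'⟩ := hdom' b'
    have e1 := ha (max a₀ a₁) (le_max_left _ _)
    have e2 := ha' (max a₀ a₁) (le_max_right _ _)
    have e3 : l - l' = -(f (max a₀ a₁) - l) + (f (max a₀ a₁) - l') := by abel
    calc |l - l'| = |(-(f (max a₀ a₁) - l)) + (f (max a₀ a₁) - l')| := by rw [← e3]
    _ ≤ |(-(f (max a₀ a₁) - l))| + |f (max a₀ a₁) - l'| := abs_add_le _ _
    _ ≤ y b + y' b' := by rw [abs_neg]; exact add_le_add e1 e2
  have step1 : ∀ b', |l - l'| ≤ y' b' := by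
    intro b'
    have lb : |l - l'| - y' b' ∈ lowerBounds (Set.range y) := by
      rintro v ⟨b, rfl⟩
      rw [sub_le_iff_le_add]
      exact key b b'
    have := hglb.2 lb
    rwa [sub_nonpos] at this
  have lb' : |l - l'| ∈ lowerBounds (Set.range y') := by
    rintro v ⟨b', rfl⟩; exact step1 b'
  have h0 : |l - l'| ≤ 0 := hglb'.2 lb'
  have h1 : l - l' ≤ 0 := (le_abs_self _).trans h0
  have h2 : -(l - l') ≤ 0 := (neg_le_abs _).trans h0
  rw [neg_nonpos] at h2
  exact sub_eq_zero.1 (le_antisymm h1 h2)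

lemma ocn_comp {f : ℕ → E} {l : E} (T : E → E) (hT : ∀ w w' : E, |T w - T w'| ≤ |w - w'|)
    (h : OrderConvNet f l) : OrderConvNet (fun n => T (f n)) (T l) := by
  obtain ⟨B, leB, y, h1, h2, h3, h4, h5, h6, h7⟩ := h
  refine ⟨B, leB, y, h1, h2, h3, h4, h5, h6, fun b => ?_⟩
  obtain ⟨a₀, ha⟩ := h7 b
  exact ⟨a₀, fun a haa => (hT (f a) l).trans (ha a haa)⟩

lemma ocn_sub {f g : ℕ → E} {lf lg : E} (hf : OrderConvNet f lf) (hg : OrderConvNet g lg) :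
    OrderConvNet (fun n => f n - g n) (lf - lg) := by
  obtain ⟨B, leB, y, hne, hrefl, htrans, hdir, hanti, hglb, hdom⟩ := hf
  obtain ⟨B', leB', y', hne', hrefl', htrans', hdir', hanti', hglb', hdom'⟩ := hg
  refine ⟨B × B', fun p q => leB p.1 q.1 ∧ leB' p.2 q.2, fun p => y p.1 + y' p.2,
    ⟨⟨hne.some, hne'.some⟩⟩, fun p => ⟨hrefl p.1, hrefl' p.2⟩,
    fun p q r hpq hqr => ⟨htrans _ _ _ hpq.1 hqr.1, htrans' _ _ _ hpq.2 hqr.2⟩,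
    fun p q => ?_, fun p q hpq => add_le_add (hanti _ _ hpq.1) (hanti' _ _ hpq.2), ?_, ?_⟩
  · obtain ⟨b₃, hb₃⟩ := hdir p.1 q.1
    obtain ⟨b₃', hb₃'⟩ := hdir' p.2 q.2
    exact ⟨⟨b₃, b₃'⟩, ⟨hb₃.1, hb₃'.1⟩, ⟨hb₃.2, hb₃'.2⟩⟩
  · constructor
    · rintro v ⟨p, rfl⟩
      have := add_le_add (hglb.1 ⟨p.1, rfl⟩) (hglb'.1 ⟨p.2, rfl⟩)
      simpa using this
    · intro c hc
      have step : ∀ b', c ≤ y' b' := by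
        intro b'
        have lb : c - y' b' ∈ lowerBounds (Set.range y) := by
          rintro v ⟨b, rfl⟩
          rw [sub_le_iff_le_add]
          exact hc ⟨(b, b'), rfl⟩
        have := hglb.2 lb
        rwa [sub_nonpos] at this
      exact hglb'.2 (by rintro v ⟨b', rfl⟩; exact step b')
  · intro p
    obtain ⟨a₀, ha⟩ := hdom p.1
    obtain ⟨a₁, ha'⟩ := hdom' p.2
    refine ⟨max a₀ a₁, fun a haa => ?_⟩
    have e1 := ha a (le_trans (le_max_left _ _) haa)
    have e2 := ha' a (le_trans (le_max_right _ _) haa)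
    have e3 : f a - g a - (lf - lg) = (f a - lf) + -(g a - lg) := by abel
    calc |f a - g a - (lf - lg)| = |(f a - lf) + -(g a - lg)| := by rw [e3]
    _ ≤ |f a - lf| + |(-(g a - lg))| := abs_add_le _ _
    _ ≤ y p.1 + y' p.2 := by rw [abs_neg]; exact add_le_add e1 e2

lemma ocn_tails (hE : DedekindComplete E) {f : ℕ → E} (hf : OrderConvNet f (0 : E)) :
    ∃ s : ℕ → E, (∀ b n, b ≤ n → |f n| ≤ s b) ∧ (∀ b, 0 ≤ s b) ∧ Antitone s ∧
      (∀ c : E, (∀ b, c ≤ s b) → c ≤ 0) ∧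
      (∀ b, IsLUB ((fun n => |f n|) '' {n | b ≤ n}) (s b)) := by
  obtain ⟨B, leB, y, hne, hrefl, htrans, hdir, hanti, hglb, hdom⟩ := hf
  have hbdd : ∀ b : ℕ, BddAbove ((fun n => |f n|) '' {n | b ≤ n}) := by
    intro b
    obtain ⟨a₀, ha⟩ := hdom hne.some
    have hne' : (Finset.range (a₀ + 1)).Nonempty := ⟨0, by simp⟩
    refine ⟨(Finset.range (a₀ + 1)).sup' hne' (fun n => |f n|) ⊔ y hne.some, ?_⟩
    rintro v ⟨n, _, rfl⟩
    rcases le_or_gt a₀ n with hn | hn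
    · have := ha n hn
      rw [sub_zero] at this
      exact le_sup_of_le_right this
    · exact le_sup_of_le_left (Finset.le_sup' (fun n => |f n|) (Finset.mem_range.2 (by omega)))
  have hlub : ∀ b : ℕ, ∃ s, IsLUB ((fun n => |f n|) '' {n | b ≤ n}) s := by
    intro b
    exact hE _ ⟨|f b|, ⟨b, (by simp : b ∈ {n | b ≤ n}), rfl⟩⟩ (hbdd b)
  choose s hs using hlub
  refine ⟨s, ?_, ?_, ?_, ?_, hs⟩
  · intro b n hbn
    exact (hs b).1 ⟨n, hbn, rfl⟩
  · intro b
    exact (abs_nonneg (f b)).trans ((hs b).1 ⟨b, (by simp : b ∈ {n | b ≤ n}), rfl⟩)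
  · intro b b' hbb'
    refine (hs b').2 ?_
    rintro v ⟨n, hn, rfl⟩
    exact (hs b).1 ⟨n, le_trans hbb' hn, rfl⟩
  · intro c hc
    have step : ∀ bb : B, c ≤ y bb := by
      intro bb
      obtain ⟨a₀, ha⟩ := hdom bb
      have hub : s a₀ ≤ y bb := by
        refine (hs a₀).2 ?_
        rintro v ⟨n, hn, rfl⟩
        have := ha n hn
        rwa [sub_zero] at this
      exact (hc a₀).trans hub
    exact hglb.2 (by rintro v ⟨bb, rfl⟩; exact step bb)

end OCN

section BP
variable {α : Type*} [Lattice α] [AddCommGroup α] [Module ℝ α]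
  [CovariantClass α α (· + ·) (· ≤ ·)]
variable {P : α →ₗ[ℝ] α}

lemma bp_nonneg (hP : IsBandProjection P) {a : α} (ha : 0 ≤ a) : 0 ≤ P a := (hP.2 a ha).1

lemma bp_le_self (hP : IsBandProjection P) {a : α} (ha : 0 ≤ a) : P a ≤ a := (hP.2 a ha).2

lemma bp_mono (hP : IsBandProjection P) {a b : α} (h : a ≤ b) : P a ≤ P b := by
  have h1 : 0 ≤ P (b - a) := bp_nonneg hP (sub_nonneg.2 h)
  rw [map_sub] at h1
  exact sub_nonneg.1 h1

lemma bp_abs_le (hP : IsBandProjection P) (a : α) : |P a| ≤ P |a| := by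
  have h1 : P a ≤ P |a| := bp_mono hP (le_abs_self a)
  have h2 : -(P a) ≤ P |a| := by
    rw [← map_neg]; exact bp_mono hP (neg_le_abs a)
  exact abs_le'.2 ⟨h1, h2⟩

lemma bp_abs_le' (hP : IsBandProjection P) (a : α) : |P a| ≤ |a| :=
  (bp_abs_le hP a).trans (bp_le_self hP (abs_nonneg a))

lemma bp_abs_fix (hP : IsBandProjection P) {a : α} (h : P a = a) : P |a| = |a| := by
  refine le_antisymm (bp_le_self hP (abs_nonneg a)) ?_
  have := bp_abs_le hP a
  rwa [h] at this

lemma bp_abs_kill (hP : IsBandProjection P) {a : α} (h : P a = 0) : P |a| = 0 := by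
  have h1 : P a⁺ = P a⁻ := by
    have := map_sub P a⁺ a⁻
    rw [posPart_sub_negPart, h] at this
    exact (sub_eq_zero.1 this.symm)
  have h2 : P a⁺ ≤ a⁺ ⊓ a⁻ := le_inf (bp_le_self hP (posPart_nonneg a))
    (h1.le.trans (bp_le_self hP (negPart_nonneg a)))
  rw [posPart_inf_negPart_eq_zero] at h2
  have h3 : P a⁺ = 0 := le_antisymm h2 (bp_nonneg hP (posPart_nonneg a))
  have h4 : P a⁻ = 0 := by rw [← h1]; exact h3
  rw [← posPart_add_negPart a, map_add, h3, h4, add_zero]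

lemma bp_posPart_fix (hP : IsBandProjection P) {a : α} (h : P a = a) : P a⁺ = a⁺ := by
  have key : P a⁺ + P a⁺ = a⁺ + a⁺ := by
    rw [← map_add]
    have e : a⁺ + a⁺ = a + |a| := by
      have h12 : (a⁺ - a⁻) + (a⁺ + a⁻) = a + |a| := by
        rw [posPart_sub_negPart, posPart_add_negPart]
      rw [← h12]; abel
    rw [e, map_add, h, bp_abs_fix hP h]
  have h2 : (2 : ℝ) • P a⁺ = (2 : ℝ) • a⁺ := by
    rw [two_smul, two_smul]; exact key
  have h3 := congrArg (fun z => ((2 : ℝ)⁻¹) • z) h2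
  simpa [inv_smul_smul₀ (two_ne_zero : (2:ℝ) ≠ 0)] using h3

lemma bp_disjoint (hP : IsBandProjection P) {u v : α} (hu : 0 ≤ u) (hv : 0 ≤ v)
    (h1 : P u = u) (h2 : P v = 0) : u ⊓ v = 0 := by
  set w := u ⊓ v with hw
  have hw0 : 0 ≤ w := le_inf hu hv
  have hwu : w ≤ u := inf_le_left
  have hwv : w ≤ v := inf_le_right
  have hPw : w ≤ P w := by
    have h3 : P (u - w) ≤ u - w := bp_le_self hP (sub_nonneg.2 hwu)
    rw [map_sub, h1] at h3
    rwa [sub_le_sub_iff_left] at h3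
  have hPw2 : P w ≤ 0 := by
    have := bp_mono hP hwv
    rwa [h2] at this
  exact le_antisymm (hPw.trans hPw2) hw0

lemma bp_lub_fix (hP : IsBandProjection P) {S : Set α} {s : α} (hS : IsLUB S s)
    (hne : S.Nonempty) (h : ∀ t ∈ S, 0 ≤ t ∧ P t = t) : P s = s := by
  obtain ⟨t₀, ht₀⟩ := hne
  have hs0 : 0 ≤ s := (h t₀ ht₀).1.trans (hS.1 ht₀)
  refine le_antisymm (bp_le_self hP hs0) (hS.2 ?_)
  intro t ht
  have := bp_mono hP (hS.1 ht)
  rw [(h t ht).2] at this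
  exact this

lemma bp_lub_kill (hP : IsBandProjection P) {S : Set α} {s : α} (hS : IsLUB S s)
    (hne : S.Nonempty) (h : ∀ t ∈ S, 0 ≤ t ∧ P t = 0) : P s = 0 := by
  obtain ⟨t₀, ht₀⟩ := hne
  have hs0 : 0 ≤ s := (h t₀ ht₀).1.trans (hS.1 ht₀)
  have hub : s ≤ s - P s := by
    refine hS.2 ?_
    intro t ht
    have h3 : P (s - t) ≤ s - t := bp_le_self hP (sub_nonneg.2 (hS.1 ht))
    rw [map_sub, (h t ht).2, sub_zero] at h3
    calc t = t - P s + P s := by abel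
    _ ≤ t - P s + (s - t) := add_le_add_right h3 _
    _ = s - P s := by abel
  have h1 : P s ≤ 0 := by
    have h4 := le_sub_iff_add_le.1 hub
    rwa [add_le_iff_nonpos_right] at h4
  have h2 : 0 ≤ P s := by
    have := bp_mono hP (hS.1 ht₀)
    exact (bp_nonneg hP (h t₀ ht₀).1).trans ((h t₀ ht₀).2 ▸ this)
  exact le_antisymm h1 h2

end BP

/-- Theorem. Let `E` be a Dedekind complete vector lattice, `F` a universal completion of
`E` (a universally complete vector lattice containing `E` as an order-dense ideal, here
via the lattice embedding `i`), `(P_k)` a sequence of band projections on `E` with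
`P_k ↑ I`, and `(x_n)` a sequence in `E`.  If for each `k` the sequence `(P_k x_n)_n`
converges in order in `E`, then `(x_n)` converges in order in `F`. -/
theorem order_convergence_from_band_projections
    {E : Type u} [Lattice E] [AddCommGroup E] [Module ℝ E]
    [CovariantClass E E (· + ·) (· ≤ ·)]
    {F : Type u} [Lattice F] [AddCommGroup F] [Module ℝ F]
    [CovariantClass F F (· + ·) (· ≤ ·)]
    (hE : DedekindComplete E)
    (hFded : DedekindComplete F) (hFlat : LaterallyComplete F)
    (i : E →ₗ[ℝ] F)
    (hi_inj : Function.Injective i)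
    (hi_sup : ∀ x y : E, i (x ⊔ y) = i x ⊔ i y)
    (hi_ideal : ∀ (x : E) (w : F), |w| ≤ |i x| → ∃ z : E, i z = w)
    (hi_dense : ∀ w : F, 0 < w → ∃ z : E, 0 < i z ∧ i z ≤ w)
    (P : ℕ → E →ₗ[ℝ] E)
    (hP : ∀ k, IsBandProjection (P k))
    (hP_mono : ∀ k, ∀ x : E, 0 ≤ x → P k x ≤ P (k + 1) x)
    (hP_sup : ∀ x : E, 0 ≤ x → IsLUB (Set.range fun k => P k x) x)
    (x : ℕ → E)
    (hconv : ∀ k, ∃ l : E, OrderConvNet (fun n => P k (x n)) l) :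
    ∃ l : F, OrderConvNet (fun n => i (x n)) l := by
  classical
  -- basic properties of i
  have imono : ∀ {a b : E}, a ≤ b → i a ≤ i b := by
    intro a b h
    have h1 : i a ⊔ i b = i b := by rw [← hi_sup, sup_eq_right.2 h]
    exact sup_eq_right.1 h1
  have irefl : ∀ {a b : E}, i a ≤ i b → a ≤ b := by
    intro a b h
    have h1 : i (a ⊔ b) = i b := by rw [hi_sup, sup_eq_right.2 h]
    exact sup_eq_right.1 (hi_inj h1)
  have iinf : ∀ a b : E, i (a ⊓ b) = i a ⊓ i b := by
    intro a b
    have e : i (a ⊓ b) = - i ((-a) ⊔ (-b)) := by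
      rw [← map_neg]; congr 1; rw [neg_sup, neg_neg, neg_neg]
    rw [e, hi_sup, neg_sup, map_neg, map_neg, neg_neg, neg_neg]
  have inonneg : ∀ {a : E}, 0 ≤ a → 0 ≤ i a := by
    intro a h
    have := imono h; rwa [map_zero] at this
  -- chain of band projections
  have hle : ∀ {j k : ℕ}, j ≤ k → ∀ z : E, 0 ≤ z → P j z ≤ P k z := by
    intro j k hjk
    induction hjk with
    | refl => exact fun z _ => le_rfl
    | @step n _ ih => exact fun z hz => (ih z hz).trans (hP_mono n z hz)
  have hC1pos : ∀ {j k : ℕ}, j ≤ k → ∀ z : E, 0 ≤ z → P j (P k z) = P j z := by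
    intro j k hjk z hz
    have hzk : (0:E) ≤ z - P k z := sub_nonneg.2 (bp_le_self (hP k) hz)
    have h1 : 0 ≤ P j (z - P k z) := bp_nonneg (hP j) hzk
    have h2 : P j (z - P k z) ≤ P k (z - P k z) := hle hjk _ hzk
    have h3 : P k (z - P k z) = 0 := by rw [map_sub, (hP k).1, sub_self]
    have h4 : P j (z - P k z) = 0 := le_antisymm (h3 ▸ h2) h1
    rw [map_sub] at h4
    exact (sub_eq_zero.1 h4).symm
  have hC1 : ∀ {j k : ℕ}, j ≤ k → ∀ z : E, P j (P k z) = P j z := by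
    intro j k hjk z
    have h1 : P j (P k z⁺) = P j z⁺ := hC1pos hjk _ (posPart_nonneg z)
    have h2 : P j (P k z⁻) = P j z⁻ := hC1pos hjk _ (negPart_nonneg z)
    have e2 : z = z⁺ - z⁻ := (posPart_sub_negPart z).symm
    calc P j (P k z) = P j (P k (z⁺ - z⁻)) := by rw [← e2]
    _ = P j (P k z⁺) - P j (P k z⁻) := by rw [map_sub, map_sub]
    _ = P j z⁺ - P j z⁻ := by rw [h1, h2]
    _ = P j (z⁺ - z⁻) := by rw [map_sub]
    _ = P j z := by rw [← e2]
  have hC2pos : ∀ {j k : ℕ}, j ≤ k → ∀ z : E, 0 ≤ z → P k (P j z) = P j z := by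
    intro j k hjk z hz
    have hPjz : 0 ≤ P j z := bp_nonneg (hP j) hz
    set w := P j z - P k (P j z) with hw
    have hw0 : 0 ≤ w := sub_nonneg.2 (bp_le_self (hP k) hPjz)
    have hwle : w ≤ P k z :=
      (sub_le_self _ (bp_nonneg (hP k) hPjz)).trans (hle hjk z hz)
    have hkw : P k w = 0 := by
      rw [hw, map_sub, (hP k).1, sub_self]
    have hdisj : P k z ⊓ w = 0 :=
      bp_disjoint (hP k) (bp_nonneg (hP k) hz) hw0 ((hP k).1 z) hkw
    have hw2 : w ≤ P k z ⊓ w := le_inf hwle le_rfl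
    rw [hdisj] at hw2
    have hw00 : w = 0 := le_antisymm hw2 hw0
    rw [hw] at hw00
    exact (sub_eq_zero.1 hw00).symm
  have hC2 : ∀ {j k : ℕ}, j ≤ k → ∀ z : E, P k (P j z) = P j z := by
    intro j k hjk z
    have h1 : P k (P j z⁺) = P j z⁺ := hC2pos hjk _ (posPart_nonneg z)
    have h2 : P k (P j z⁻) = P j z⁻ := hC2pos hjk _ (negPart_nonneg z)
    have e2 : z = z⁺ - z⁻ := (posPart_sub_negPart z).symm
    calc P k (P j z) = P k (P j (z⁺ - z⁻)) := by rw [← e2]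
    _ = P k (P j z⁺) - P k (P j z⁻) := by rw [map_sub, map_sub]
    _ = P j z⁺ - P j z⁻ := by rw [h1, h2]
    _ = P j (z⁺ - z⁻) := by rw [map_sub]
    _ = P j z := by rw [← e2]
  -- the limits l k
  choose l hl using hconv
  have hPcont : ∀ (k : ℕ) (f : ℕ → E) (c : E), OrderConvNet f c →
      OrderConvNet (fun n => P k (f n)) (P k c) := by
    intro k f c h
    refine ocn_comp (fun w => P k w) (fun w w' => ?_) h
    rw [← map_sub]
    exact bp_abs_le' (hP k) _
  have hl_fix : ∀ k, P k (l k) = l k := by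
    intro k
    have h1 := hPcont k _ _ (hl k)
    have h2 : (fun n => P k (P k (x n))) = fun n => P k (x n) := funext fun n => (hP k).1 _
    rw [h2] at h1
    exact ocn_unique h1 (hl k)
  have hl_proj : ∀ {j k : ℕ}, j ≤ k → P j (l k) = l j := by
    intro j k hjk
    have h1 := hPcont j _ _ (hl k)
    have h2 : (fun n => P j (P k (x n))) = fun n => P j (x n) := funext fun n => hC1 hjk _
    rw [h2] at h1
    exact ocn_unique h1 (hl j)
  have hl_proj' : ∀ {j k : ℕ}, j ≤ k → P k (l j) = l j := by
    intro j k hjk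
    calc P k (l j) = P k (P j (l j)) := by rw [hl_fix j]
    _ = P j (l j) := hC2 hjk _
    _ = l j := hl_fix j
  -- the sequences g and V
  set g : ℕ → ℕ → E := fun k n => P k (x n) - l k with hgdef
  have hg : ∀ k, OrderConvNet (fun n => g k n) (0 : E) := fun k => ocn_shift (hl k)
  set V : ℕ → ℕ → E := fun k n =>
    match k with
    | 0 => g 0 n
    | (m+1) => g (m+1) n - g m n
    with hVdef
  have hV0 : ∀ n, V 0 n = g 0 n := fun n => rfl
  have hVs : ∀ m n, V (m+1) n = g (m+1) n - g m n := fun m n => rfl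
  have hVconv : ∀ k, OrderConvNet (fun n => V k n) (0 : E) := by
    intro k
    cases k with
    | zero => exact hg 0
    | succ m =>
      have h := ocn_sub (hg (m+1)) (hg m)
      rw [sub_zero] at h
      exact h
  have hgsum : ∀ K n, g K n = ∑ m ∈ Finset.range (K+1), V m n := by
    intro K n
    induction K with
    | zero => simp [hV0]
    | succ K ih => rw [Finset.sum_range_succ, ← ih, hVs]; abel
  have hVfix : ∀ k n, P k (V k n) = V k n := by
    intro k n
    cases k with
    | zero =>
      show P 0 (P 0 (x n) - l 0) = P 0 (x n) - l 0
      rw [map_sub, (hP 0).1, hl_fix 0]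
    | succ m =>
      show P (m+1) ((P (m+1) (x n) - l (m+1)) - (P m (x n) - l m)) = _
      rw [map_sub, map_sub, map_sub, (hP (m+1)).1, hl_fix (m+1),
        hC2 (Nat.le_succ m), hl_proj' (Nat.le_succ m)]
  have hVkill : ∀ k n, P k (V (k+1) n) = 0 := by
    intro k n
    show P k ((P (k+1) (x n) - l (k+1)) - (P k (x n) - l k)) = 0
    rw [map_sub, map_sub, map_sub, hC1 (Nat.le_succ k), hl_proj (Nat.le_succ k),
      (hP k).1, hl_fix k, sub_self]
  have hVfix' : ∀ {k j : ℕ}, k ≤ j → ∀ n, P j (V k n) = V k n := by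
    intro k j hkj n
    calc P j (V k n) = P j (P k (V k n)) := by rw [hVfix]
    _ = P k (V k n) := hC2 hkj _
    _ = V k n := hVfix k n
  have hVkill' : ∀ {k j : ℕ}, j ≤ k → ∀ n, P j (V (k+1) n) = 0 := by
    intro k j hjk n
    calc P j (V (k+1) n) = P j (P k (V (k+1) n)) := (hC1 hjk _).symm
    _ = P j 0 := by rw [hVkill]
    _ = 0 := map_zero _
  -- tail suprema of the V's
  choose a ha using fun k => ocn_tails hE (hVconv k)
  have ha1 : ∀ k b n, b ≤ n → |V k n| ≤ a k b := fun k => (ha k).1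
  have ha2 : ∀ k b, 0 ≤ a k b := fun k => (ha k).2.1
  have ha3 : ∀ k, Antitone (a k) := fun k => (ha k).2.2.1
  have ha4 : ∀ k c, (∀ b, c ≤ a k b) → c ≤ 0 := fun k => (ha k).2.2.2.1
  have ha5 : ∀ k b, IsLUB ((fun n => |V k n|) '' {n | b ≤ n}) (a k b) := fun k => (ha k).2.2.2.2
  have hafix : ∀ k b, P k (a k b) = a k b := by
    intro k b
    refine bp_lub_fix (hP k) (ha5 k b) ⟨|V k b|, ⟨b, (by simp : b ∈ {n | b ≤ n}), rfl⟩⟩ ?_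
    rintro t ⟨n, _, rfl⟩
    exact ⟨abs_nonneg _, bp_abs_fix (hP k) (hVfix k n)⟩
  have hakill : ∀ k b, P k (a (k+1) b) = 0 := by
    intro k b
    refine bp_lub_kill (hP k) (ha5 (k+1) b) ⟨|V (k+1) b|, ⟨b, (by simp : b ∈ {n | b ≤ n}), rfl⟩⟩ ?_
    rintro t ⟨n, _, rfl⟩
    exact ⟨abs_nonneg _, bp_abs_kill (hP k) (hVkill k n)⟩
  have hafix' : ∀ {k j : ℕ}, k ≤ j → ∀ b, P j (a k b) = a k b := by
    intro k j hkj b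
    calc P j (a k b) = P j (P k (a k b)) := by rw [hafix]
    _ = P k (a k b) := hC2 hkj _
    _ = a k b := hafix k b
  have hakill' : ∀ {k j : ℕ}, j ≤ k → ∀ b, P j (a (k+1) b) = 0 := by
    intro k j hjk b
    calc P j (a (k+1) b) = P j (P k (a (k+1) b)) := (hC1 hjk _).symm
    _ = P j 0 := by rw [hakill]
    _ = 0 := map_zero _
  have hadisj : ∀ {m m' : ℕ}, m < m' → ∀ b b', a m b ⊓ a m' b' = 0 := by
    intro m m' hmm b b'
    obtain ⟨t, rfl⟩ : ∃ t, m' = t+1 := ⟨m'-1, by omega⟩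
    exact bp_disjoint (hP t) (ha2 m b) (ha2 _ b') (hafix' (by omega) b) (hakill' le_rfl b')
  -- partial sums A
  set A : ℕ → ℕ → E := fun K b => ∑ m ∈ Finset.range (K+1), a m b with hAdef
  have hA0 : ∀ b, A 0 b = a 0 b := by
    intro b
    show ∑ m ∈ Finset.range (0+1), a m b = a 0 b
    exact Finset.sum_range_one (f := fun m => a m b)
  have hAs : ∀ K b, A (K+1) b = A K b + a (K+1) b := by
    intro K b
    show ∑ m ∈ Finset.range (K+1+1), a m b = (∑ m ∈ Finset.range (K+1), a m b) + a (K+1) b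
    exact Finset.sum_range_succ (fun m => a m b) (K+1)
  have hAnonneg : ∀ K b, 0 ≤ A K b := by
    intro K b
    show (0:E) ≤ ∑ m ∈ Finset.range (K+1), a m b
    exact aux_sum_nonneg _ (fun m => ha2 m b) _
  have hAanti : ∀ K, Antitone (A K) := by
    intro K b b' hbb'
    show ∑ m ∈ Finset.range (K+1), a m b' ≤ ∑ m ∈ Finset.range (K+1), a m b
    exact aux_sum_le_sum (fun m => ha3 m hbb') _
  have hAfix : ∀ K b, P K (A K b) = A K b := by
    intro K b
    rw [hAdef]
    simp only [map_sum]
    refine Finset.sum_congr rfl ?_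
    intro m hm
    exact hafix' (Nat.lt_succ_iff.1 (Finset.mem_range.1 hm)) b
  have hAprop : ∀ K c, (∀ b, c ≤ A K b) → c ≤ 0 := by
    intro K
    induction K with
    | zero => exact fun c hc => ha4 0 c (fun b => (hc b).trans_eq (hA0 b))
    | succ K ih =>
      exact fun c hc =>
        aux_glb_add (hAanti K) (ha3 (K+1)) ih (ha4 (K+1)) c (fun b => (hc b).trans_eq (hAs K b))
  have hgA : ∀ K b n, b ≤ n → |g K n| ≤ A K b := by
    intro K b n hbn
    rw [hgsum]
    refine (aux_abs_sum_le (fun m => V m n) (K+1)).trans ?_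
    show ∑ m ∈ Finset.range (K+1), |V m n| ≤ ∑ m ∈ Finset.range (K+1), a m b
    exact aux_sum_le_sum (fun m => ha1 m b n hbn) _
  -- the net z in F
  have hzex : ∀ b : ℕ, ∃ zb, IsLUB (Set.range fun m => i (a m b)) zb := by
    intro b
    refine hFlat _ ?_ ?_
    · rintro w ⟨m, rfl⟩; exact inonneg (ha2 m b)
    · rintro w ⟨m, rfl⟩ w' ⟨m', rfl⟩ hne
      rcases lt_trichotomy m m' with h | h | h
      · show i (a m b) ⊓ i (a m' b) = 0
        rw [← iinf, hadisj h b b, map_zero]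
      · exact absurd (by rw [h]) hne
      · show i (a m b) ⊓ i (a m' b) = 0
        rw [← iinf, inf_comm (a m b), hadisj h b b, map_zero]
  choose z hz using hzex
  have hz_nonneg : ∀ b, 0 ≤ z b := fun b => (inonneg (ha2 0 b)).trans ((hz b).1 ⟨0, rfl⟩)
  have hz_anti : Antitone z := by
    intro b b' hbb'
    refine (hz b').2 ?_
    rintro w ⟨m, rfl⟩
    exact (imono (ha3 m hbb')).trans ((hz b).1 ⟨m, rfl⟩)
  have hAz : ∀ K b, i (A K b) ≤ z b := by
    intro K b
    induction K with
    | zero => rw [hA0]; exact (hz b).1 ⟨0, rfl⟩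
    | succ K ih =>
      rw [hAs, map_add]
      have hdisjE : A K b ⊓ a (K+1) b = 0 :=
        bp_disjoint (hP K) (hAnonneg K b) (ha2 (K+1) b) (hAfix K b) (hakill K b)
      have hdisjF : i (A K b) ⊓ i (a (K+1) b) = 0 := by
        rw [← iinf, hdisjE, map_zero]
      rw [aux_add_eq_sup hdisjF]
      exact sup_le ih ((hz b).1 ⟨K+1, rfl⟩)
  -- the disjoint pieces d of the limit
  set d : ℕ → E := fun m =>
    match m with
    | 0 => l 0
    | (k+1) => l (k+1) - l k
    with hddef
  have hd0 : d 0 = l 0 := rfl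
  have hds : ∀ k, d (k+1) = l (k+1) - l k := fun k => rfl
  have hd_fix : ∀ k, P k (d k) = d k := by
    intro k
    cases k with
    | zero => exact hl_fix 0
    | succ m => rw [hds, map_sub, hl_fix (m+1), hl_proj' (Nat.le_succ m)]
  have hd_kill : ∀ k, P k (d (k+1)) = 0 := by
    intro k
    rw [hds, map_sub, hl_proj (Nat.le_succ k), hl_fix k, sub_self]
  have hd_fix' : ∀ {m j : ℕ}, m ≤ j → P j (d m) = d m := by
    intro m j hmj
    calc P j (d m) = P j (P m (d m)) := by rw [hd_fix]
    _ = P m (d m) := hC2 hmj _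
    _ = d m := hd_fix m
  have hd_kill' : ∀ {k j : ℕ}, j ≤ k → P j (d (k+1)) = 0 := by
    intro k j hjk
    calc P j (d (k+1)) = P j (P k (d (k+1))) := (hC1 hjk _).symm
    _ = P j 0 := by rw [hd_kill]
    _ = 0 := map_zero _
  have hddisj : ∀ {m m' : ℕ}, m < m' → |d m| ⊓ |d m'| = 0 := by
    intro m m' h
    obtain ⟨t, rfl⟩ : ∃ t, m' = t+1 := ⟨m'-1, by omega⟩
    exact bp_disjoint (hP t) (abs_nonneg _) (abs_nonneg _)
      (bp_abs_fix (hP t) (hd_fix' (by omega))) (bp_abs_kill (hP t) (hd_kill' le_rfl))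
  have hlds : ∀ K, l (K+1) = l K + d (K+1) := fun K => by rw [hds]; abel
  have hldisj : ∀ K, |l K| ⊓ |d (K+1)| = 0 := fun K =>
    bp_disjoint (hP K) (abs_nonneg _) (abs_nonneg _)
      (bp_abs_fix (hP K) (hl_fix K)) (bp_abs_kill (hP K) (hd_kill K))
  have hlpos : ∀ K, (l (K+1))⁺ = (l K)⁺ + (d (K+1))⁺ := by
    intro K
    rw [hlds K]
    exact aux_posPart_add (hldisj K)
  have hlneg : ∀ K, (l (K+1))⁻ = (l K)⁻ + (d (K+1))⁻ := by
    intro K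
    rw [hlds K]
    exact aux_negPart_add (hldisj K)
  have hlpos_mono : Monotone (fun K => (l K)⁺) :=
    monotone_nat_of_le_succ (fun K => by
      rw [hlpos K]; exact le_add_of_nonneg_right (posPart_nonneg _))
  have hlneg_mono : Monotone (fun K => (l K)⁻) :=
    monotone_nat_of_le_succ (fun K => by
      rw [hlneg K]; exact le_add_of_nonneg_right (negPart_nonneg _))
  have hlpos_sum : ∀ K, (l K)⁺ = ∑ m ∈ Finset.range (K+1), (d m)⁺ := by
    intro K
    induction K with
    | zero => rw [Finset.sum_range_one, hd0]
    | succ K ih => rw [Finset.sum_range_succ, ← ih, hlpos]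
  have hlneg_sum : ∀ K, (l K)⁻ = ∑ m ∈ Finset.range (K+1), (d m)⁻ := by
    intro K
    induction K with
    | zero => rw [Finset.sum_range_one, hd0]
    | succ K ih => rw [Finset.sum_range_succ, ← ih, hlneg]
  -- the two halves of the limit
  have hdisjPP : ∀ {p q : ℕ}, p ≠ q → (d p)⁺ ⊓ (d q)⁺ = 0 := by
    have key : ∀ {p q : ℕ}, p < q → (d p)⁺ ⊓ (d q)⁺ = 0 := by
      intro p q hpq
      have h1 : (d p)⁺ ⊓ (d q)⁺ ≤ |d p| ⊓ |d q| :=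
        inf_le_inf (aux_posPart_le_abs _) (aux_posPart_le_abs _)
      have h2 : (0:E) ≤ (d p)⁺ ⊓ (d q)⁺ := le_inf (posPart_nonneg _) (posPart_nonneg _)
      exact le_antisymm (h1.trans_eq (hddisj hpq)) h2
    intro p q hpq
    rcases lt_or_gt_of_ne hpq with h | h
    · exact key h
    · rw [inf_comm]; exact key h
  have hdisjNN : ∀ {p q : ℕ}, p ≠ q → (d p)⁻ ⊓ (d q)⁻ = 0 := by
    have key : ∀ {p q : ℕ}, p < q → (d p)⁻ ⊓ (d q)⁻ = 0 := by
      intro p q hpq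
      have h1 : (d p)⁻ ⊓ (d q)⁻ ≤ |d p| ⊓ |d q| :=
        inf_le_inf (aux_negPart_le_abs _) (aux_negPart_le_abs _)
      have h2 : (0:E) ≤ (d p)⁻ ⊓ (d q)⁻ := le_inf (negPart_nonneg _) (negPart_nonneg _)
      exact le_antisymm (h1.trans_eq (hddisj hpq)) h2
    intro p q hpq
    rcases lt_or_gt_of_ne hpq with h | h
    · exact key h
    · rw [inf_comm]; exact key h
  obtain ⟨U, hU⟩ : ∃ U, IsLUB (Set.range fun m => i ((d m)⁺)) U := by
    refine hFlat _ ?_ ?_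
    · rintro w ⟨m, rfl⟩; exact inonneg (posPart_nonneg _)
    · rintro w ⟨m, rfl⟩ w' ⟨m', rfl⟩ hne
      show i ((d m)⁺) ⊓ i ((d m')⁺) = 0
      have hmm : m ≠ m' := fun h => hne (by rw [h])
      rw [← iinf, hdisjPP hmm, map_zero]
  obtain ⟨Vn, hVn⟩ : ∃ Vn, IsLUB (Set.range fun m => i ((d m)⁻)) Vn := by
    refine hFlat _ ?_ ?_
    · rintro w ⟨m, rfl⟩; exact inonneg (negPart_nonneg _)
    · rintro w ⟨m, rfl⟩ w' ⟨m', rfl⟩ hne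
      show i ((d m)⁻) ⊓ i ((d m')⁻) = 0
      have hmm : m ≠ m' := fun h => hne (by rw [h])
      rw [← iinf, hdisjNN hmm, map_zero]
  have hUlub : IsLUB (Set.range fun K => i ((l K)⁺)) U := by
    have hub : ∀ K, i ((l K)⁺) ≤ U := by
      intro K
      induction K with
      | zero => exact hU.1 ⟨0, by show i ((d 0)⁺) = i ((l 0)⁺); rw [hd0]⟩
      | succ K ih =>
        rw [hlpos K, map_add]
        have hdisjE : (l K)⁺ ⊓ (d (K+1))⁺ = 0 := by
          have h1 : (l K)⁺ ⊓ (d (K+1))⁺ ≤ |l K| ⊓ |d (K+1)| :=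
            inf_le_inf (aux_posPart_le_abs _) (aux_posPart_le_abs _)
          have h2 : (0:E) ≤ (l K)⁺ ⊓ (d (K+1))⁺ := le_inf (posPart_nonneg _) (posPart_nonneg _)
          exact le_antisymm (h1.trans_eq (hldisj K)) h2
        have hdisjF : i ((l K)⁺) ⊓ i ((d (K+1))⁺) = 0 := by
          rw [← iinf, hdisjE, map_zero]
        rw [aux_add_eq_sup hdisjF]
        exact sup_le ih (hU.1 ⟨K+1, rfl⟩)
    constructor
    · rintro w ⟨K, rfl⟩; exact hub K
    · intro W hW
      refine hU.2 ?_
      rintro w ⟨m, rfl⟩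
      have h1 : (d m)⁺ ≤ (l m)⁺ := by
        rw [hlpos_sum m]
        exact aux_single_le_sum (fun j => (d j)⁺) (fun j => posPart_nonneg _) (m+1) m (by omega)
      exact (imono h1).trans (hW ⟨m, rfl⟩)
  have hVnlub : IsLUB (Set.range fun K => i ((l K)⁻)) Vn := by
    have hub : ∀ K, i ((l K)⁻) ≤ Vn := by
      intro K
      induction K with
      | zero => exact hVn.1 ⟨0, by show i ((d 0)⁻) = i ((l 0)⁻); rw [hd0]⟩
      | succ K ih =>
        rw [hlneg K, map_add]
        have hdisjE : (l K)⁻ ⊓ (d (K+1))⁻ = 0 := by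
          have h1 : (l K)⁻ ⊓ (d (K+1))⁻ ≤ |l K| ⊓ |d (K+1)| :=
            inf_le_inf (aux_negPart_le_abs _) (aux_negPart_le_abs _)
          have h2 : (0:E) ≤ (l K)⁻ ⊓ (d (K+1))⁻ := le_inf (negPart_nonneg _) (negPart_nonneg _)
          exact le_antisymm (h1.trans_eq (hldisj K)) h2
        have hdisjF : i ((l K)⁻) ⊓ i ((d (K+1))⁻) = 0 := by
          rw [← iinf, hdisjE, map_zero]
        rw [aux_add_eq_sup hdisjF]
        exact sup_le ih (hVn.1 ⟨K+1, rfl⟩)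
    constructor
    · rintro w ⟨K, rfl⟩; exact hub K
    · intro W hW
      refine hVn.2 ?_
      rintro w ⟨m, rfl⟩
      have h1 : (d m)⁻ ≤ (l m)⁻ := by
        rw [hlneg_sum m]
        exact aux_single_le_sum (fun j => (d j)⁻) (fun j => negPart_nonneg _) (m+1) m (by omega)
      exact (imono h1).trans (hW ⟨m, rfl⟩)
  -- the supremum property transferred to F
  have hiPsup : ∀ w : E, 0 ≤ w → IsLUB (Set.range fun k => i (P k w)) (i w) := by
    intro w hw
    constructor
    · rintro v ⟨k, rfl⟩; exact imono (bp_le_self (hP k) hw)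
    · intro W hW
      have hW0 : 0 ≤ W := (inonneg (bp_nonneg (hP 0) hw)).trans (hW ⟨0, rfl⟩)
      set dd := (i w - W)⁺ with hdd
      have hd1 : dd ≤ i w := by
        rw [hdd, posPart_def]
        exact sup_le (sub_le_self _ hW0) (inonneg hw)
      have hd0 : 0 ≤ dd := posPart_nonneg _
      have habs : |dd| ≤ |i w| := by
        rw [abs_of_nonneg hd0, abs_of_nonneg (inonneg hw)]
        exact hd1
      obtain ⟨zz, hzz⟩ := hi_ideal w dd habs
      have hzz0 : 0 ≤ zz := irefl (by rw [map_zero, hzz]; exact hd0)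
      have hzle : ∀ k, zz ≤ w - P k w := by
        intro k
        refine irefl ?_
        rw [hzz, map_sub]
        rw [hdd, posPart_def]
        exact sup_le (sub_le_sub_left (hW ⟨k, rfl⟩) _)
          (sub_nonneg.2 (imono (bp_le_self (hP k) hw)))
      have hw2 : w ≤ w - zz := by
        refine (hP_sup w hw).2 ?_
        rintro vv ⟨k, rfl⟩
        exact le_sub_comm.1 (hzle k)
      have hzneg : zz ≤ 0 := (le_sub_self_iff _).1 hw2
      have hdd2 : dd ≤ 0 := by
        rw [← hzz, ← map_zero i]
        exact imono hzneg
      have hdd0 : (i w - W)⁺ = 0 := le_antisymm (hdd ▸ hdd2) hd0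
      exact sub_nonpos.1 (posPart_eq_zero.1 hdd0)
  have hresid : ∀ w : E, 0 ≤ w → ∀ cc : F, (∀ k, cc ≤ i (w - P k w)) → cc ≤ 0 := by
    intro w hw cc hcc
    have h1 : ∀ k, i (P k w) ≤ i w - cc := by
      intro k
      have h2 := hcc k
      rw [map_sub] at h2
      exact le_sub_comm.1 h2
    have h2 : i w ≤ i w - cc := (hiPsup w hw).2 (by rintro v ⟨k, rfl⟩; exact h1 k)
    exact (le_sub_self_iff _).1 h2
  -- two elementary bounds
  have bx : ∀ (M : ℕ) (w : E), P M w - w ≤ w⁻ - P M (w⁻) := by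
    intro M w
    have ew : w = w⁺ - w⁻ := (posPart_sub_negPart w).symm
    have e : P M w - w = (P M (w⁺) - w⁺) + (w⁻ - P M (w⁻)) := by
      calc P M w - w = P M (w⁺ - w⁻) - (w⁺ - w⁻) := by rw [← ew]
      _ = (P M (w⁺) - w⁺) + (w⁻ - P M (w⁻)) := by rw [map_sub]; abel
    rw [e]
    have h1 : P M (w⁺) - w⁺ ≤ 0 := sub_nonpos.2 (bp_le_self (hP M) (posPart_nonneg w))
    calc (P M (w⁺) - w⁺) + (w⁻ - P M (w⁻)) ≤ 0 + (w⁻ - P M (w⁻)) := add_le_add_left h1 _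
    _ = w⁻ - P M (w⁻) := zero_add _
  have bx' : ∀ (M : ℕ) (w : E), w - P M w ≤ w⁺ - P M (w⁺) := by
    intro M w
    have h := bx M (-w)
    rw [negPart_neg] at h
    calc w - P M w = P M (-w) - (-w) := by rw [map_neg]; abel
    _ ≤ w⁺ - P M (w⁺) := h
  refine ⟨U - Vn, ULift.{u} ℕ, (fun b₁ b₂ => b₁.down ≤ b₂.down), (fun b => z b.down),
    ⟨⟨0⟩⟩, fun b => le_refl b.down,
    fun b₁ b₂ b₃ h12 h23 => le_trans h12 h23,
    fun b₁ b₂ => ⟨⟨max b₁.down b₂.down⟩, le_max_left _ _, le_max_right _ _⟩,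
    fun b₁ b₂ h => hz_anti h, ⟨?_, ?_⟩, ?_⟩
  · -- 0 is a lower bound
    rintro w ⟨b, rfl⟩
    exact hz_nonneg b.down
  · -- greatest lower bound
    intro c hc
    by_contra hcon
    have hcp : c⁺ ≠ 0 := fun h => hcon (posPart_eq_zero.1 h)
    have hcp2 : 0 < c⁺ := lt_of_le_of_ne (posPart_nonneg c) (Ne.symm hcp)
    obtain ⟨e, he1, he2⟩ := hi_dense _ hcp2
    have hcz : ∀ b, c⁺ ≤ z b := by
      intro b
      rw [posPart_def]
      exact sup_le (hc ⟨⟨b⟩, rfl⟩) (hz_nonneg b)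
    have he0 : 0 ≤ e := irefl (by rw [map_zero]; exact he1.le)
    have hez : ∀ b, i e ≤ z b := fun b => he2.trans (hcz b)
    have hPke : ∀ k b, P k e ≤ A k b + A k b := by
      intro k b
      set t := (P k e - A k b)⁺ with htdef
      have htfix : P k t = t :=
        bp_posPart_fix (hP k) (by rw [map_sub, (hP k).1, hAfix])
      have ht0 : 0 ≤ t := posPart_nonneg _
      have htle : t ≤ e := by
        have h1 : t ≤ (P k e)⁺ := posPart_mono (sub_le_self _ (hAnonneg k b))
        have h2 : (P k e)⁺ = P k e := posPart_eq_self.2 (bp_nonneg (hP k) he0)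
        rw [h2] at h1
        exact h1.trans (bp_le_self (hP k) he0)
      have htz : i t ≤ z b := (imono htle).trans (hez b)
      have hinf : i t ⊓ z b ≤ i (A k b) := by
        refine aux_inf_lub_le (hz b) ?_
        rintro w ⟨m, rfl⟩
        rcases le_or_gt m k with hm | hm
        · refine inf_le_right.trans (imono ?_)
          show a m b ≤ A k b
          exact aux_single_le_sum (fun j => a j b) (fun j => ha2 j b) (k+1) m (by omega)
        · obtain ⟨s', rfl⟩ : ∃ s', m = s'+1 := ⟨m-1, by omega⟩
          have htfix2 : P s' t = t := by
            calc P s' t = P s' (P k t) := by rw [htfix]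
            _ = P k t := hC2 (by omega) _
            _ = t := htfix
          have hdisj : t ⊓ a (s'+1) b = 0 :=
            bp_disjoint (hP s') ht0 (ha2 _ b) htfix2 (hakill s' b)
          rw [← iinf, hdisj, map_zero]
          exact inonneg (hAnonneg k b)
      have hiteq : i t ⊓ z b = i t := inf_eq_left.2 htz
      have htA : t ≤ A k b := irefl (by rw [← hiteq]; exact hinf)
      have h3 : P k e - A k b ≤ t := le_posPart _
      have h4 : P k e ≤ t + A k b := sub_le_iff_le_add.1 h3
      exact h4.trans (add_le_add_left htA _)
    have hPk0 : ∀ k, P k e = 0 := by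
      intro k
      have hle0 : P k e ≤ 0 :=
        aux_glb_add (hAanti k) (hAanti k) (hAprop k) (hAprop k) _ (fun b => hPke k b)
      exact le_antisymm hle0 (bp_nonneg (hP k) he0)
    have he00 : e ≤ 0 := by
      refine (hP_sup e he0).2 ?_
      rintro w ⟨k, rfl⟩
      exact (hPk0 k).le
    have : e = 0 := le_antisymm he00 he0
    rw [this, map_zero] at he1
    exact lt_irrefl _ he1
  · -- eventual domination
    intro bu
    obtain ⟨b⟩ := bu
    refine ⟨b, fun n hbn => ?_⟩
    have hb1 : ∀ M, i (l M) - i (x n) ≤ z b + i ((x n)⁻ - P M ((x n)⁻)) := by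
      intro M
      have e1 : l M - x n = (l M - P M (x n)) + (P M (x n) - x n) := by abel
      have e2 : l M - P M (x n) ≤ A M b := by
        have h3 : l M - P M (x n) ≤ |g M n| := by
          have : l M - P M (x n) = -(g M n) := by
            show l M - P M (x n) = -(P M (x n) - l M); abel
          rw [this]
          exact neg_le_abs _
        exact h3.trans (hgA M b n hbn)
      have e3 : P M (x n) - x n ≤ (x n)⁻ - P M ((x n)⁻) := bx M (x n)
      have e4 : l M - x n ≤ A M b + ((x n)⁻ - P M ((x n)⁻)) := by
        rw [e1]; exact add_le_add e2 e3
      calc i (l M) - i (x n) = i (l M - x n) := (map_sub i _ _).symm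
      _ ≤ i (A M b + ((x n)⁻ - P M ((x n)⁻))) := imono e4
      _ = i (A M b) + i ((x n)⁻ - P M ((x n)⁻)) := map_add i _ _
      _ ≤ z b + i ((x n)⁻ - P M ((x n)⁻)) := add_le_add_left (hAz M b) _
    have hb2 : ∀ M, i (x n) - i (l M) ≤ z b + i ((x n)⁺ - P M ((x n)⁺)) := by
      intro M
      have e1 : x n - l M = (x n - P M (x n)) + (P M (x n) - l M) := by abel
      have e2 : P M (x n) - l M ≤ A M b := (le_abs_self _).trans (hgA M b n hbn)
      have e3 : x n - P M (x n) ≤ (x n)⁺ - P M ((x n)⁺) := bx' M (x n)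
      have e4 : x n - l M ≤ ((x n)⁺ - P M ((x n)⁺)) + A M b := by
        rw [e1]; exact add_le_add e3 e2
      calc i (x n) - i (l M) = i (x n - l M) := (map_sub i _ _).symm
      _ ≤ i (((x n)⁺ - P M ((x n)⁺)) + A M b) := imono e4
      _ = i ((x n)⁺ - P M ((x n)⁺)) + i (A M b) := map_add i _ _
      _ ≤ i ((x n)⁺ - P M ((x n)⁺)) + z b := add_le_add_right (hAz M b) _
      _ = z b + i ((x n)⁺ - P M ((x n)⁺)) := add_comm _ _
    have part1 : U - Vn - i (x n) ≤ z b := by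
      have key1 : ∀ k, U ≤ z b + i (x n) + Vn + i ((x n)⁻ - P k ((x n)⁻)) := by
        intro k
        refine hUlub.2 ?_
        rintro w ⟨K, rfl⟩
        show i ((l K)⁺) ≤ _
        have m1 : i ((l K)⁺) ≤ i ((l (max k K))⁺) := imono (hlpos_mono (le_max_right k K))
        refine m1.trans ?_
        set M := max k K with hM
        have e1 : (l M)⁺ = l M + (l M)⁻ := by
          have h := posPart_sub_negPart (l M)
          exact sub_eq_iff_eq_add.1 h
        have e2 : i ((l M)⁺) = i (l M) + i ((l M)⁻) := by rw [e1, map_add]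
        rw [e2]
        have e3 : i (l M) ≤ z b + i (x n) + i ((x n)⁻ - P M ((x n)⁻)) := by
          have h4 := sub_le_iff_le_add.1 (hb1 M)
          exact h4.trans_eq (by abel)
        have e4 : i ((x n)⁻ - P M ((x n)⁻)) ≤ i ((x n)⁻ - P k ((x n)⁻)) :=
          imono (sub_le_sub_left (hle (le_max_left k K) _ (negPart_nonneg _)) _)
        have e5 : i ((l M)⁻) ≤ Vn := hVnlub.1 ⟨M, rfl⟩
        calc i (l M) + i ((l M)⁻)
            ≤ (z b + i (x n) + i ((x n)⁻ - P k ((x n)⁻))) + Vn :=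
          add_le_add (e3.trans (add_le_add_right e4 _)) e5
        _ = z b + i (x n) + Vn + i ((x n)⁻ - P k ((x n)⁻)) := by abel
      have h5 : ∀ k, U - Vn - i (x n) - z b ≤ i ((x n)⁻ - P k ((x n)⁻)) :=
        fun k => aux_rearr (key1 k)
      have h6 : U - Vn - i (x n) - z b ≤ 0 := hresid ((x n)⁻) (negPart_nonneg _) _ h5
      exact sub_nonpos.1 h6
    have part2 : i (x n) - (U - Vn) ≤ z b := by
      have key2 : ∀ k, Vn ≤ z b + (U - i (x n)) + i ((x n)⁺ - P k ((x n)⁺)) := by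
        intro k
        refine hVnlub.2 ?_
        rintro w ⟨K, rfl⟩
        show i ((l K)⁻) ≤ _
        have m1 : i ((l K)⁻) ≤ i ((l (max k K))⁻) := imono (hlneg_mono (le_max_right k K))
        refine m1.trans ?_
        set M := max k K with hM
        have e1 : (l M)⁺ - l M = (l M)⁻ := by
          calc (l M)⁺ - l M = (l M)⁺ - ((l M)⁺ - (l M)⁻) := by rw [posPart_sub_negPart]
          _ = (l M)⁻ := sub_sub_cancel _ _
        have e2 : i ((l M)⁻) = i ((l M)⁺) - i (l M) := by rw [← e1, map_sub]
        rw [e2]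
        have e3 : i ((l M)⁺) ≤ U := hUlub.1 ⟨M, rfl⟩
        have e4 : i (x n) - i (l M) ≤ z b + i ((x n)⁺ - P k ((x n)⁺)) :=
          (hb2 M).trans (add_le_add_right
            (imono (sub_le_sub_left (hle (le_max_left k K) _ (posPart_nonneg _)) _)) _)
        calc i ((l M)⁺) - i (l M)
            = (i ((l M)⁺) - i (x n)) + (i (x n) - i (l M)) := by abel
        _ ≤ (U - i (x n)) + (z b + i ((x n)⁺ - P k ((x n)⁺))) :=
          add_le_add (sub_le_sub_right e3 _) e4
        _ = z b + (U - i (x n)) + i ((x n)⁺ - P k ((x n)⁺)) := by abel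
      have h5 : ∀ k, i (x n) - (U - Vn) - z b ≤ i ((x n)⁺ - P k ((x n)⁺)) :=
        fun k => aux_rearr2 (key2 k)
      have h6 := hresid ((x n)⁺) (posPart_nonneg _) _ h5
      exact sub_nonpos.1 h6
    refine abs_le'.2 ⟨part2, ?_⟩
    rw [neg_sub]
    exact part1
end

section
/- Let E be a Dedekind complete vector lattice, F a universal completion of E, (P_γ)_{γ∈Γ} a net of band projections on E with P_γ ↑ I, and (x_α)_{α∈A} a net in E. If for each γ the net (P_γ x_α)_{α∈A} is order convergent in E, then (x_α)_{α∈A} is uo-convergent in F. -/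
universe u

/-- A net `(x_a)` in a vector lattice converges in unbounded order (uo-converges) to `l`
if `|x_a - l| ⊓ w` order converges to `0` for every `w ∈ E⁺`. -/
def UoConvNet {E : Type u} [Lattice E] [AddCommGroup E] {A : Type*} [Preorder A]
    (x : A → E) (l : E) : Prop :=
  ∀ w : E, 0 ≤ w → OrderConvNet (fun a => |x a - l| ⊓ w) (0 : E)

set_option linter.unusedSectionVars false
set_option linter.unusedVariables false
set_option maxHeartbeats 1000000

section Lat
variable {α : Type*} [Lattice α] [AddCommGroup α] [CovariantClass α α (· + ·) (· ≤ ·)]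

lemma myAbs_eq_zero {a : α} (h : |a| ≤ 0) : a = 0 :=
  le_antisymm ((le_abs_self a).trans h) (neg_nonpos.mp ((neg_le_abs a).trans h))

lemma myInfAddLe {a b c : α} (ha : 0 ≤ a) (hb : 0 ≤ b) (hc : 0 ≤ c) :
    (a + b) ⊓ c ≤ a ⊓ c + b ⊓ c := by
  set t := (a + b) ⊓ c with ht
  have h1 : t - a ⊓ c = (t - a) ⊔ (t - c) := by
    rw [sub_eq_add_neg, neg_inf, add_sup, ← sub_eq_add_neg, ← sub_eq_add_neg]
  have h2 : t - a ≤ b ⊓ c := by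
    refine le_inf (sub_le_iff_le_add.mpr ?_) (sub_le_iff_le_add.mpr ?_)
    · rw [add_comm]; exact inf_le_left
    · exact le_trans inf_le_right (le_add_of_nonneg_right ha)
  have h3 : t - c ≤ b ⊓ c := le_trans (sub_nonpos.mpr inf_le_right) (le_inf hb hc)
  have h4 : t - a ⊓ c ≤ b ⊓ c := h1 ▸ sup_le h2 h3
  rw [add_comm]
  exact sub_le_iff_le_add.mp h4

lemma myDisjAdd {a b c : α} (ha : 0 ≤ a) (hb : 0 ≤ b) (hc : 0 ≤ c)
    (hac : a ⊓ c = 0) (hbc : b ⊓ c = 0) : (a + b) ⊓ c = 0 := by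
  have h := myInfAddLe ha hb hc
  rw [hac, hbc, add_zero] at h
  exact le_antisymm h (le_inf (add_nonneg ha hb) hc)

lemma myDisjSumLe {a b w : α} (hab : a ⊓ b = 0) (haw : a ≤ w) (hbw : b ≤ w) :
    a + b ≤ w := by
  have h : a + b = a ⊔ b := by rw [← inf_add_sup a b, hab, zero_add]
  rw [h]; exact sup_le haw hbw

lemma myNsmulDisj {a b : α} (ha : 0 ≤ a) (hb : 0 ≤ b) (hab : a ⊓ b = 0) (n : ℕ) :
    (n • a) ⊓ b = 0 := by
  induction n with
  | zero => rw [zero_nsmul]; exact inf_of_le_left hb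
  | succ n ih =>
      rw [succ_nsmul]
      exact myDisjAdd (nsmul_nonneg ha n) ha hb ih hab

lemma myIsLUB_add (S : Set α) (p t : α) (h : IsLUB S p) :
    IsLUB ((fun v => v + t) '' S) (p + t) := by
  constructor
  · rintro v ⟨s, hs, rfl⟩
    exact add_le_add_left (h.1 hs) t
  · intro c hc
    have h2 : p ≤ c - t := h.2 fun s hs => le_sub_iff_add_le.mpr (hc ⟨s, hs, rfl⟩)
    exact le_sub_iff_add_le.mp h2

lemma myIsLUB_inf (S : Set α) (p w : α) (h : IsLUB S p) :
    IsLUB ((fun v => v ⊓ w) '' S) (p ⊓ w) := by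
  constructor
  · rintro v ⟨s, hs, rfl⟩
    exact inf_le_inf_right w (h.1 hs)
  · intro c hc
    have key : ∀ s ∈ S, s ≤ c + (p ⊔ w) - w := by
      intro s hs
      have h1 : s ⊓ w + (s ⊔ w) = s + w := inf_add_sup s w
      have h2 : s ⊓ w ≤ c := hc ⟨s, hs, rfl⟩
      have h3 : s ⊔ w ≤ p ⊔ w := sup_le_sup_right (h.1 hs) w
      have h5 : s + w ≤ c + (p ⊔ w) := by rw [← h1]; exact add_le_add h2 h3
      exact le_sub_iff_add_le.mpr h5
    have h6 : p ≤ c + (p ⊔ w) - w := h.2 key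
    have h7 : p + w ≤ c + (p ⊔ w) := le_sub_iff_add_le.mp h6
    have h8 : p ⊓ w = p + w - (p ⊔ w) := eq_sub_of_add_eq (inf_add_sup p w)
    rw [h8]
    exact sub_le_iff_le_add.mpr h7

lemma myArch (hD : DedekindComplete α) {a w : α} (h : ∀ n : ℕ, n • a ≤ w) : a ≤ 0 := by
  obtain ⟨s, hs⟩ := hD (Set.range fun n : ℕ => n • a) ⟨0, ⟨0, by simp⟩⟩
    ⟨w, by rintro v ⟨n, rfl⟩; exact h n⟩
  have h1 : ∀ n : ℕ, n • a ≤ s - a := by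
    intro n
    have h2 := hs.1 ⟨n + 1, rfl⟩
    simp only [succ_nsmul] at h2
    exact le_sub_iff_add_le.mpr h2
  have h2 : s ≤ s - a := hs.2 (by rintro v ⟨n, rfl⟩; exact h1 n)
  have h3 : s + a ≤ s := le_sub_iff_add_le.mp h2
  exact (add_le_iff_nonpos_right s).mp h3

lemma myPosPartOfDisj {a b : α} (ha : 0 ≤ a) (hb : 0 ≤ b) (hab : a ⊓ b = 0) :
    (a - b)⁺ = a := by
  have h1 : (a - b)⁺ = (a - b) ⊔ (b - b) := by rw [sub_self]; rfl
  have h2 : (a - b) ⊔ (b - b) = a ⊔ b - b := (sup_sub a b b).symm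
  have h3 : a ⊔ b = a + b := by rw [← inf_add_sup a b, hab, zero_add]
  rw [h1, h2, h3, add_sub_cancel_right]

end Lat

section Emb
variable {E : Type u} [Lattice E] [AddCommGroup E] [Module ℝ E]
    [CovariantClass E E (· + ·) (· ≤ ·)]
    {F : Type u} [Lattice F] [AddCommGroup F] [Module ℝ F]
    [CovariantClass F F (· + ·) (· ≤ ·)]
    (i : E →ₗ[ℝ] F)

section basic
variable (hi_sup : ∀ x y : E, i (x ⊔ y) = i x ⊔ i y)

include hi_sup

lemma iMono {a b : E} (h : a ≤ b) : i a ≤ i b := by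
  have h1 : i (a ⊔ b) = i a ⊔ i b := hi_sup a b
  rw [sup_eq_right.mpr h] at h1
  rw [h1]; exact le_sup_left

lemma iPos (a : E) : i (a⁺) = (i a)⁺ := by
  have := hi_sup a 0
  simp only [map_zero] at this
  exact this

lemma iNeg' (a : E) : i (a⁻) = (i a)⁻ := by
  have := hi_sup (-a) 0
  simp only [map_zero, map_neg] at this
  exact this

lemma iAbs (a : E) : i |a| = |i a| := by
  have h : |a| = a ⊔ -a := rfl
  rw [h, hi_sup a (-a), map_neg]; rfl

lemma iInf2 (a b : E) : i (a ⊓ b) = i a ⊓ i b := by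
  have h : a ⊓ b = -(-a ⊔ -b) := by rw [← neg_inf, neg_neg]
  rw [h, map_neg, hi_sup, map_neg, map_neg, neg_sup, neg_neg, neg_neg]

lemma iNonneg {a : E} (h : 0 ≤ a) : 0 ≤ i a := by
  simpa using iMono i hi_sup h

variable (hi_inj : Function.Injective i)
include hi_inj

lemma iReflect {a b : E} (h : i a ≤ i b) : a ≤ b := by
  have h1 : (i (a - b))⁺ = 0 := by
    rw [map_sub]
    exact posPart_eq_zero.mpr (sub_nonpos.mpr h)
  rw [← iPos i hi_sup] at h1
  have h2 : (a - b)⁺ = 0 := hi_inj (by rw [h1, map_zero])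
  exact sub_nonpos.mp (posPart_eq_zero.mp h2)

-- i preserves suprema of ranges (over nonempty index)
lemma iIsLUB (hi_ideal : ∀ (x : E) (w : F), |w| ≤ |i x| → ∃ z : E, i z = w)
    {ι : Type*} [Nonempty ι] (v : ι → E) (s : E)
    (h : IsLUB (Set.range v) s) : IsLUB (Set.range fun γ => i (v γ)) (i s) := by
  constructor
  · rintro u ⟨γ, rfl⟩
    exact iMono i hi_sup (h.1 ⟨γ, rfl⟩)
  · intro c hc
    set d := (i s - c)⁺ with hd
    have hvle : ∀ γ, v γ ≤ s := fun γ => h.1 ⟨γ, rfl⟩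
    have hdle : ∀ γ, d ≤ i ((s - v γ)⁺) := by
      intro γ
      have h1 : i s - c ≤ i s - i (v γ) := sub_le_sub_left (hc ⟨γ, rfl⟩) _
      have h2 : i s - i (v γ) = i (s - v γ) := (map_sub i s (v γ)).symm
      have h3 : i (s - v γ) ≤ i ((s - v γ)⁺) := iMono i hi_sup (le_posPart _)
      have h4 : (0 : F) ≤ i ((s - v γ)⁺) := iNonneg i hi_sup (posPart_nonneg _)
      exact sup_le (h1.trans (h2 ▸ h3)) h4
    obtain ⟨γ₀⟩ := ‹Nonempty ι›
    have habs : |d| ≤ |i ((s - v γ₀)⁺)| := by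
      rw [abs_of_nonneg (posPart_nonneg _), abs_of_nonneg (iNonneg i hi_sup (posPart_nonneg _))]
      exact hdle γ₀
    obtain ⟨e, he⟩ := hi_ideal ((s - v γ₀)⁺) d habs
    have he0 : 0 ≤ e := by
      refine iReflect i hi_sup hi_inj ?_
      rw [he, map_zero]; exact posPart_nonneg _
    have heub : ∀ γ, v γ ≤ s - e := by
      intro γ
      have h5 : e ≤ (s - v γ)⁺ := iReflect i hi_sup hi_inj (by rw [he]; exact hdle γ)
      have h6 : (s - v γ)⁺ = s - v γ := posPart_eq_self.mpr (sub_nonneg.mpr (hvle γ))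
      rw [h6] at h5
      have h7 : e + v γ ≤ s := le_sub_iff_add_le.mp h5
      exact le_sub_iff_add_le.mpr (by rwa [add_comm] at h7)
    have h8 : s ≤ s - e := h.2 (by rintro u ⟨γ, rfl⟩; exact heub γ)
    have h9 : e ≤ 0 := by
      have := le_sub_iff_add_le.mp h8
      rw [add_comm] at this
      exact (add_le_iff_nonpos_right s).mp (by rwa [add_comm] at this)
    have he0' : e = 0 := le_antisymm h9 he0
    have hd0 : d = 0 := by rw [← he, he0', map_zero]
    have : i s - c ≤ 0 := posPart_eq_zero.mp hd0
    exact sub_nonpos.mp this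


lemma iGLBzero (hi_ideal : ∀ (x : E) (w : F), |w| ≤ |i x| → ∃ z : E, i z = w)
    {ι : Type*} [Nonempty ι] (v : ι → E)
    (h : IsGLB (Set.range v) 0) : IsGLB (Set.range fun j => i (v j)) 0 := by
  constructor
  · rintro u ⟨j, rfl⟩
    exact iNonneg i hi_sup (h.1 ⟨j, rfl⟩)
  · intro c hc
    have hv0 : ∀ j, 0 ≤ v j := fun j => h.1 ⟨j, rfl⟩
    have h1 : ∀ j, c⁺ ≤ i (v j) := by
      intro j
      have h2 : c ≤ i (v j) := hc ⟨j, rfl⟩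
      have h3 : (0:F) ≤ i (v j) := iNonneg i hi_sup (hv0 j)
      exact sup_le h2 h3
    obtain ⟨j₀⟩ := ‹Nonempty ι›
    have habs : |c⁺| ≤ |i (v j₀)| := by
      rw [abs_of_nonneg (posPart_nonneg c), abs_of_nonneg (iNonneg i hi_sup (hv0 j₀))]
      exact h1 j₀
    obtain ⟨e, he⟩ := hi_ideal (v j₀) _ habs
    have he0 : 0 ≤ e := iReflect i hi_sup hi_inj (by rw [he, map_zero]; exact posPart_nonneg c)
    have helb : ∀ j, e ≤ v j := fun j => iReflect i hi_sup hi_inj (by rw [he]; exact h1 j)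
    have he1 : e ≤ 0 := h.2 (by rintro u ⟨j, rfl⟩; exact helb j)
    have : c⁺ = 0 := by rw [← he, le_antisymm he1 he0, map_zero]
    have h4 : c ≤ 0 := posPart_eq_zero.mp this
    exact h4

end basic
end Emb



section Band
variable {E : Type u} [Lattice E] [AddCommGroup E] [Module ℝ E]
    [CovariantClass E E (· + ·) (· ≤ ·)]
    {P Q : E →ₗ[ℝ] E}

lemma bpMono (hP : IsBandProjection P) {a b : E} (h : a ≤ b) : P a ≤ P b := by
  have h1 : 0 ≤ P (b - a) := (hP.2 _ (sub_nonneg.mpr h)).1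
  rw [map_sub] at h1
  exact sub_nonneg.mp h1

lemma bpAbsLe (hP : IsBandProjection P) (v : E) : |P v| ≤ |v| := by
  refine sup_le ?_ ?_
  · exact (bpMono hP (le_abs_self v)).trans (hP.2 _ (abs_nonneg v)).2
  · have : P (-v) ≤ |v| := (bpMono hP (neg_le_abs v)).trans (hP.2 _ (abs_nonneg v)).2
    rwa [map_neg] at this

lemma bpIminusPmono (hP : IsBandProjection P) {u v : E} (h : u ≤ v) :
    u - P u ≤ v - P v := by
  have h1 : P (v - u) ≤ v - u := (hP.2 _ (sub_nonneg.mpr h)).2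
  rw [map_sub] at h1
  rw [sub_le_sub_iff, add_comm]
  exact sub_le_sub_iff.mp h1

/-- disjointness of ranges: for a, b ≥ 0, `P a ⊓ (b - P b) = 0`. -/
lemma bpDisj (hP : IsBandProjection P) {a b : E} (ha : 0 ≤ a) (hb : 0 ≤ b) :
    P a ⊓ (b - P b) = 0 := by
  set w := P a ⊓ (b - P b) with hw
  have hw0 : 0 ≤ w := le_inf (hP.2 a ha).1 (sub_nonneg.mpr (hP.2 b hb).2)
  have hPw0 : P w = 0 := by
    have h1 : P w ≤ P (b - P b) := bpMono hP inf_le_right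
    rw [map_sub, hP.1 b, sub_self] at h1
    exact le_antisymm h1 (hP.2 w hw0).1
  have h2 : w - P w ≤ P a - P (P a) := bpIminusPmono hP inf_le_left
  rw [hP.1 a, sub_self, hPw0, sub_zero] at h2
  exact le_antisymm h2 hw0

lemma bpPosPart (hP : IsBandProjection P) (v : E) : P (v⁺) = (P v)⁺ := by
  have hd : P (v⁺) ⊓ P (v⁻) = 0 := by
    refine le_antisymm ?_ (le_inf (hP.2 _ (posPart_nonneg v)).1 (hP.2 _ (negPart_nonneg v)).1)
    calc P (v⁺) ⊓ P (v⁻) ≤ v⁺ ⊓ v⁻ :=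
          inf_le_inf (hP.2 _ (posPart_nonneg v)).2 (hP.2 _ (negPart_nonneg v)).2
    _ = 0 := posPart_inf_negPart_eq_zero v
  have h1 : P v = P (v⁺) - P (v⁻) := by rw [← map_sub, posPart_sub_negPart]
  rw [h1, myPosPartOfDisj (hP.2 _ (posPart_nonneg v)).1 (hP.2 _ (negPart_nonneg v)).1 hd]

/-- composition: if `P ≤ Q` then `P ∘ Q = P`. -/
lemma bpComp (hP : IsBandProjection P) (hQ : IsBandProjection Q)
    (hle : ∀ z : E, 0 ≤ z → P z ≤ Q z) (u : E) : P (Q u) = P u := by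
  have key : ∀ z : E, 0 ≤ z → P (Q z) = P z := by
    intro z hz
    have h1 : 0 ≤ z - Q z := sub_nonneg.mpr (hQ.2 z hz).2
    have h2 : z - Q z ≤ z - P z := sub_le_sub_left (hle z hz) z
    have h3 : P (z - Q z) ≤ P (z - P z) := bpMono hP h2
    rw [map_sub, map_sub, hP.1 z, sub_self] at h3
    have h4 : 0 ≤ P (z - Q z) := (hP.2 _ h1).1
    rw [map_sub] at h4
    have h5 : P z - P (Q z) = 0 := le_antisymm h3 h4
    exact (sub_eq_zero.mp h5).symm
  have hu : u = u⁺ - u⁻ := (posPart_sub_negPart u).symm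
  rw [hu]
  simp only [map_sub]
  rw [key _ (posPart_nonneg u), key _ (negPart_nonneg u)]

end Band

section OC
variable {E : Type u} [Lattice E] [AddCommGroup E] [CovariantClass E E (· + ·) (· ≤ ·)]
  {A : Type*} [Preorder A] [IsDirected A (· ≤ ·)] [Nonempty A]

lemma ocUnique {x : A → E} {l₁ l₂ : E}
    (h1 : OrderConvNet x l₁) (h2 : OrderConvNet x l₂) : l₁ = l₂ := by
  obtain ⟨B, leB, y, hBne, hrefl, htrans, hdir, hanti, hglb, hbnd⟩ := h1
  obtain ⟨B', leB', y', hBne', hrefl', htrans', hdir', hanti', hglb', hbnd'⟩ := h2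
  have key : ∀ (b : B) (b' : B'), |l₁ - l₂| ≤ y b + y' b' := by
    intro b b'
    obtain ⟨a₀, ha₀⟩ := hbnd b
    obtain ⟨a₀', ha₀'⟩ := hbnd' b'
    obtain ⟨a, ha, ha'⟩ := directed_of (· ≤ ·) a₀ a₀'
    have e1 : |x a - l₁| ≤ y b := ha₀ a ha
    have e2 : |x a - l₂| ≤ y' b' := ha₀' a ha'
    have e3 : l₁ - l₂ = (x a - l₂) - (x a - l₁) := by abel
    calc |l₁ - l₂| = |(x a - l₂) - (x a - l₁)| := by rw [← e3]
      _ ≤ |x a - l₂| + |x a - l₁| := by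
          rw [sub_eq_add_neg]
          exact (abs_add_le _ _).trans (by rw [abs_neg])
      _ ≤ y' b' + y b := add_le_add e2 e1
      _ = y b + y' b' := add_comm _ _
  have h3 : ∀ b' : B', |l₁ - l₂| - y' b' ≤ 0 := by
    intro b'
    refine hglb.2 ?_
    rintro v ⟨b, rfl⟩
    exact sub_le_iff_le_add.mpr (by rw [add_comm]; exact (key b b').trans (le_of_eq (add_comm _ _)))
  have h4 : |l₁ - l₂| ≤ 0 := by
    refine hglb'.2 ?_
    rintro v ⟨b', rfl⟩
    exact sub_nonpos.mp (h3 b')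
  have h5 : l₁ - l₂ = 0 :=
    le_antisymm ((le_abs_self _).trans h4) (neg_nonpos.mp ((neg_le_abs _).trans h4))
  exact sub_eq_zero.mp h5

lemma ocMap {E' : Type u} [Lattice E'] [AddCommGroup E'] [Module ℝ E']
    [CovariantClass E' E' (· + ·) (· ≤ ·)]
    {x : A → E'} {l : E'} {Q : E' →ₗ[ℝ] E'}
    (hQmono : ∀ a b : E', a ≤ b → Q a ≤ Q b) (hQle : ∀ a : E', 0 ≤ a → Q a ≤ a)
    (hQabs : ∀ v : E', |Q v| ≤ |v|)
    (h : OrderConvNet x l) : OrderConvNet (fun a => Q (x a)) (Q l) := by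
  obtain ⟨B, leB, y, hBne, hrefl, htrans, hdir, hanti, hglb, hbnd⟩ := h
  refine ⟨B, leB, y, hBne, hrefl, htrans, hdir, hanti, hglb, ?_⟩
  intro b
  obtain ⟨a₀, ha₀⟩ := hbnd b
  refine ⟨a₀, fun a ha => ?_⟩
  have h1 : |Q (x a) - Q l| = |Q (x a - l)| := by rw [map_sub]
  have h2 : |Q (x a - l)| ≤ |x a - l| := hQabs _
  exact h1 ▸ (h2.trans (ha₀ a ha))

end OC

section SupEx
variable {F : Type u} [Lattice F] [AddCommGroup F] [CovariantClass F F (· + ·) (· ≤ ·)]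

lemma rieszDisj (hFded : DedekindComplete F) {u s : F} (hu : 0 ≤ u) (hs : 0 ≤ s) :
    ∃ p, IsLUB (Set.range fun n : ℕ => u ⊓ n • s) p ∧ (u - p) ⊓ s = 0 := by
  obtain ⟨p, hp⟩ := hFded (Set.range fun n : ℕ => u ⊓ n • s) ⟨_, ⟨0, rfl⟩⟩
    ⟨u, by rintro v ⟨n, rfl⟩; exact inf_le_left⟩
  refine ⟨p, hp, ?_⟩
  set t := (u - p) ⊓ s with htdef
  have hpu : p ≤ u := hp.2 (by rintro v ⟨n, rfl⟩; exact inf_le_left)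
  have ht0 : 0 ≤ t := le_inf (sub_nonneg.mpr hpu) hs
  have step : ∀ n : ℕ, u ⊓ n • s + t ≤ p := by
    intro n
    have h1 : u ⊓ n • s + t ≤ u ⊓ (n + 1) • s := by
      refine le_inf ?_ ?_
      · have h2 : t ≤ u - u ⊓ n • s := by
          have h3 : u - p ≤ u - u ⊓ n • s := sub_le_sub_left (hp.1 ⟨n, rfl⟩) u
          exact inf_le_left.trans h3
        calc u ⊓ n • s + t ≤ u ⊓ n • s + (u - u ⊓ n • s) := add_le_add_right h2 _
          _ = u := by abel
      · rw [succ_nsmul]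
        exact add_le_add inf_le_right inf_le_right
    exact h1.trans (hp.1 ⟨n + 1, rfl⟩)
  have hlub2 := myIsLUB_add (Set.range fun n : ℕ => u ⊓ n • s) p t hp
  have h4 : p + t ≤ p := hlub2.2 (by rintro v ⟨w, ⟨n, rfl⟩, rfl⟩; exact step n)
  have h5 : t ≤ 0 := (add_le_iff_nonpos_right p).mp h4
  exact le_antisymm h5 ht0

variable {Γ : Type*} [Preorder Γ] [IsDirected Γ (· ≤ ·)] [Nonempty Γ]

lemma supExists (hFded : DedekindComplete F) (hFlat : LaterallyComplete F)
    {d : Γ → F} (hmono : ∀ γ γ', γ ≤ γ' → d γ ≤ d γ') (h0 : ∀ γ, 0 ≤ d γ)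
    (hdisj : ∀ γ γ', γ ≤ γ' → (d γ' - d γ) ⊓ d γ = 0) :
    ∃ σ, IsLUB (Set.range d) σ := by
  classical
  by_cases hall : ∀ γ, d γ = 0
  · refine ⟨0, ?_, ?_⟩
    · rintro v ⟨γ, rfl⟩; rw [hall γ]
    · intro c hc
      obtain ⟨γ₀⟩ := ‹Nonempty Γ›
      have := hc ⟨γ₀, rfl⟩
      rwa [hall γ₀] at this
  push_neg at hall
  obtain ⟨γₛ, hγₛ⟩ := hall
  -- Zorn: maximal pairwise disjoint family of nonzero elements below some d γ
  set 𝒜 : Set (Set F) :=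
    {M | (∀ m ∈ M, 0 ≤ m ∧ m ≠ 0 ∧ ∃ γ, m ≤ d γ) ∧ M.Pairwise fun a b => a ⊓ b = 0}
    with h𝒜
  have hsymm : Symmetric fun a b : F => a ⊓ b = 0 := by
    intro a b h
    show b ⊓ a = 0
    rwa [inf_comm]
  have hzorn : ∀ c ⊆ 𝒜, IsChain (· ⊆ ·) c → ∃ ub ∈ 𝒜, ∀ s ∈ c, s ⊆ ub := by
    intro c hc hchain
    refine ⟨⋃₀ c, ⟨?_, ?_⟩, fun s hs => Set.subset_sUnion_of_mem hs⟩
    · rintro m ⟨s, hsc, hms⟩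
      exact (hc hsc).1 m hms
    · rintro a ⟨s, hsc, has⟩ b ⟨s', hs'c, hbs'⟩ hab
      rcases hchain.total hsc hs'c with h | h
      · exact (hc hs'c).2 (h has) hbs' hab
      · exact (hc hsc).2 has (h hbs') hab
  obtain ⟨M, hM⟩ := zorn_subset 𝒜 hzorn
  have hM𝒜 : M ∈ 𝒜 := hM.prop
  have hMmax : ∀ N ∈ 𝒜, M ⊆ N → N = M := fun N hN hsub => hM.eq_of_ge hN hsub
  have maxProp : ∀ t : F, 0 ≤ t → t ≠ 0 → (∃ γ, t ≤ d γ) →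
      ¬ (∀ m ∈ M, t ⊓ m = 0) := by
    intro t ht0 htne hγ hdis
    have hins : insert t M ∈ 𝒜 := by
      constructor
      · rintro m (rfl | hm)
        · exact ⟨ht0, htne, hγ⟩
        · exact hM𝒜.1 m hm
      · exact Set.pairwise_insert.mpr
          ⟨hM𝒜.2, fun m hm _ => ⟨hdis m hm, (inf_comm m t).trans (hdis m hm)⟩⟩
    have : insert t M = M := hMmax _ hins (Set.subset_insert t M)
    have htM : t ∈ M := this ▸ Set.mem_insert t M
    have := hdis t htM
    rw [inf_idem] at this
    exact htne this
  have hMne : M.Nonempty := by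
    by_contra hne
    rw [Set.not_nonempty_iff_eq_empty] at hne
    exact maxProp (d γₛ) (h0 γₛ) hγₛ ⟨γₛ, le_refl _⟩ (by subst hne; simp)
  -- for each m ∈ M pick witness and band-projection value
  have hwit : ∀ m : ↥M, ∃ γ, (m : F) ≤ d γ := fun m => (hM𝒜.1 m m.2).2.2
  choose wγ hwγ using hwit
  have hm0 : ∀ m : ↥M, (0 : F) ≤ m := fun m => (hM𝒜.1 m m.2).1
  have hpm : ∀ m : ↥M, ∃ p, IsLUB (Set.range fun n : ℕ => d (wγ m) ⊓ n • (m : F)) p ∧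
      (d (wγ m) - p) ⊓ (m : F) = 0 := fun m => rieszDisj hFded (h0 _) (hm0 m)
  choose pm hpmLUB hpmD using hpm
  have hpm0 : ∀ m : ↥M, 0 ≤ pm m := by
    intro m
    have := (hpmLUB m).1 ⟨0, rfl⟩
    simpa [inf_of_le_right (h0 (wγ m))] using this
  have hpmle : ∀ m : ↥M, pm m ≤ d (wγ m) :=
    fun m => (hpmLUB m).2 (by rintro v ⟨n, rfl⟩; exact inf_le_left)
  -- pm m is disjoint from anything disjoint from m
  have pmDisjOther : ∀ (m : ↥M) (v : F), 0 ≤ v → (m : F) ⊓ v = 0 → pm m ⊓ v = 0 := by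
    intro m v hv hmv
    have h1 := myIsLUB_inf _ (pm m) v (hpmLUB m)
    refine le_antisymm (h1.2 ?_) (le_inf (hpm0 m) hv)
    rintro u ⟨w, ⟨n, rfl⟩, rfl⟩
    have h2 : d (wγ m) ⊓ n • (m : F) ⊓ v ≤ n • (m : F) ⊓ v :=
      inf_le_inf_right v inf_le_right
    rw [myNsmulDisj (hm0 m) hv hmv n] at h2
    exact h2
  set SC : Set F := Set.range (fun m : ↥M => pm m) with hSC
  obtain ⟨σ, hσ⟩ : ∃ σ, IsLUB SC σ := by
    refine hFlat SC (by rintro v ⟨m, rfl⟩; exact hpm0 m) ?_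
    rintro v ⟨m₁, rfl⟩ u ⟨m₂, rfl⟩ hne
    have hm12 : m₁ ≠ m₂ := by rintro rfl; exact hne rfl
    have hval : (m₁ : F) ⊓ (m₂ : F) = 0 :=
      hM𝒜.2 m₁.2 m₂.2 (fun h => hm12 (Subtype.ext h))
    have h1 : pm m₁ ⊓ (m₂ : F) = 0 := pmDisjOther m₁ _ (hm0 m₂) hval
    have h2 : pm m₂ ⊓ pm m₁ = 0 := pmDisjOther m₂ _ (hpm0 m₁) (by rwa [inf_comm] at h1)
    rwa [inf_comm] at h2
  obtain ⟨m₀, hm₀⟩ := hMne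
  have hσ0 : 0 ≤ σ := (hpm0 ⟨m₀, hm₀⟩).trans (hσ.1 ⟨⟨m₀, hm₀⟩, rfl⟩)
  refine ⟨σ, ?_, ?_⟩
  · -- upper bound
    rintro v ⟨γ, rfl⟩
    have claim1 : ∀ (m : ↥M) (n : ℕ), d γ ⊓ n • (m : F) ≤ σ := by
      intro m n
      obtain ⟨γ'', h1, h2⟩ := directed_of (· ≤ ·) γ (wγ m)
      have e1 : d γ ⊓ n • (m : F) ≤ d γ'' ⊓ n • (m : F) :=
        inf_le_inf_right _ (hmono _ _ h1)
      have e2 : d γ'' ⊓ n • (m : F) ≤ d (wγ m) ⊓ n • (m : F) + (d γ'' - d (wγ m)) ⊓ n • (m : F) := by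
        have := myInfAddLe (h0 (wγ m)) (sub_nonneg.mpr (hmono _ _ h2))
          (nsmul_nonneg (hm0 m) n)
        rwa [add_sub_cancel] at this
      have e3 : (d γ'' - d (wγ m)) ⊓ (m : F) = 0 := by
        refine le_antisymm ?_ (le_inf (sub_nonneg.mpr (hmono _ _ h2)) (hm0 m))
        calc (d γ'' - d (wγ m)) ⊓ (m : F) ≤ (d γ'' - d (wγ m)) ⊓ d (wγ m) :=
              inf_le_inf_left _ (hwγ m)
          _ = 0 := hdisj _ _ h2
      have e4 : (d γ'' - d (wγ m)) ⊓ n • (m : F) = 0 := by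
        have := myNsmulDisj (hm0 m) (sub_nonneg.mpr (hmono _ _ h2))
          (by rwa [inf_comm] at e3) n
        rwa [inf_comm] at this
      have e5 : d (wγ m) ⊓ n • (m : F) ≤ pm m := (hpmLUB m).1 ⟨n, rfl⟩
      calc d γ ⊓ n • (m : F) ≤ _ := e1
        _ ≤ _ := e2
        _ = d (wγ m) ⊓ n • (m : F) := by rw [e4, add_zero]
        _ ≤ pm m := e5
        _ ≤ σ := hσ.1 ⟨m, rfl⟩
    set t := d γ - d γ ⊓ σ with htdef
    have ht0 : 0 ≤ t := sub_nonneg.mpr inf_le_left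
    have claim2 : ∀ m ∈ M, t ⊓ m = 0 := by
      intro m hm
      obtain ⟨p', hp'LUB, hp'D⟩ := rieszDisj hFded (h0 γ) (hm0 ⟨m, hm⟩)
      have hp'le : p' ≤ d γ ⊓ σ := hp'LUB.2 (by
        rintro v ⟨n, rfl⟩; exact le_inf inf_le_left (claim1 ⟨m, hm⟩ n))
      have h6 : t ≤ d γ - p' := sub_le_sub_left hp'le (d γ)
      refine le_antisymm ?_ (le_inf ht0 (hm0 ⟨m, hm⟩))
      calc t ⊓ m ≤ (d γ - p') ⊓ m := inf_le_inf_right m h6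
        _ = 0 := hp'D
    by_cases htz : t = 0
    · have : d γ = d γ ⊓ σ := by
        have := sub_eq_zero.mp htz; exact this
      exact this ▸ inf_le_right
    · exact absurd claim2 (maxProp t ht0 htz ⟨γ, (sub_le_self _ (le_inf (h0 γ) hσ0))⟩)
  · intro c hc
    refine hσ.2 ?_
    rintro v ⟨m, rfl⟩
    exact (hpmle m).trans (hc ⟨wγ m, rfl⟩)

end SupEx

/-- Theorem. Let `E` be a Dedekind complete vector lattice, `F` a universal completion of
`E` (embedded via `i`), `(P_γ)_{γ ∈ Γ}` a net of band projections on `E` with `P_γ ↑ I`,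
and `(x_α)_{α ∈ A}` a net in `E`.  If for each `γ` the net `(P_γ x_α)_α` is order
convergent in `E`, then `(x_α)` is uo-convergent in `F`. -/

theorem uo_convergence_from_net_of_band_projections
    {E : Type u} [Lattice E] [AddCommGroup E] [Module ℝ E]
    [CovariantClass E E (· + ·) (· ≤ ·)]
    {F : Type u} [Lattice F] [AddCommGroup F] [Module ℝ F]
    [CovariantClass F F (· + ·) (· ≤ ·)]
    {Γ : Type*} [Preorder Γ] [IsDirected Γ (· ≤ ·)] [Nonempty Γ]
    {A : Type*} [Preorder A] [IsDirected A (· ≤ ·)] [Nonempty A]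
    (hE : DedekindComplete E)
    (hFded : DedekindComplete F) (hFlat : LaterallyComplete F)
    (i : E →ₗ[ℝ] F)
    (hi_inj : Function.Injective i)
    (hi_sup : ∀ x y : E, i (x ⊔ y) = i x ⊔ i y)
    (hi_ideal : ∀ (x : E) (w : F), |w| ≤ |i x| → ∃ z : E, i z = w)
    (hi_dense : ∀ w : F, 0 < w → ∃ z : E, 0 < i z ∧ i z ≤ w)
    (P : Γ → E →ₗ[ℝ] E)
    (hP : ∀ γ, IsBandProjection (P γ))
    (hP_mono : ∀ γ γ' : Γ, γ ≤ γ' → ∀ x : E, 0 ≤ x → P γ x ≤ P γ' x)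
    (hP_sup : ∀ x : E, 0 ≤ x → IsLUB (Set.range fun γ => P γ x) x)
    (x : A → E)
    (hconv : ∀ γ, ∃ l : E, OrderConvNet (fun a => P γ (x a)) l) :
    ∃ y : F, UoConvNet (fun a => i (x a)) y := by
  classical
  -- limits of (P γ ∘ x)
  choose l hl using hconv
  have hPmono' : ∀ γ, ∀ a b : E, a ≤ b → P γ a ≤ P γ b := fun γ a b h => bpMono (hP γ) h
  have hPabs : ∀ γ, ∀ v : E, |P γ v| ≤ |v| := fun γ v => bpAbsLe (hP γ) v
  -- consistency of the limits
  have hcons : ∀ γ γ', γ ≤ γ' → P γ (l γ') = l γ := by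
    intro γ γ' hγ
    have h1 : OrderConvNet (fun a => P γ (P γ' (x a))) (P γ (l γ')) :=
      ocMap (hPmono' γ) (fun a ha => (hP γ).2 a ha |>.2) (hPabs γ) (hl γ')
    have h2 : (fun a => P γ (P γ' (x a))) = fun a => P γ (x a) := by
      funext a
      exact bpComp (hP γ) (hP γ') (fun z hz => hP_mono γ γ' hγ z hz) (x a)
    rw [h2] at h1
    exact ocUnique h1 (hl γ)
  have hfix : ∀ γ, P γ (l γ) = l γ := fun γ => hcons γ γ (le_refl γ)
  -- positive and negative parts of the limits
  have hNegPart : ∀ γ (v : E), P γ (v⁻) = (P γ v)⁻ := by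
    intro γ v
    have h1 : (P γ v)⁻ = (-(P γ v))⁺ := rfl
    rw [h1, ← map_neg, ← bpPosPart (hP γ)]
    rfl
  have hppos : ∀ γ γ', γ ≤ γ' → P γ ((l γ')⁺) = (l γ)⁺ := by
    intro γ γ' hγ
    rw [bpPosPart (hP γ), hcons γ γ' hγ]
  have hpneg : ∀ γ γ', γ ≤ γ' → P γ ((l γ')⁻) = (l γ)⁻ := by
    intro γ γ' hγ
    rw [hNegPart γ, hcons γ γ' hγ]
  -- the increasing nets i((l γ)⁺) and i((l γ)⁻) in F
  set dp : Γ → F := fun γ => i ((l γ)⁺) with hdp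
  set dn : Γ → F := fun γ => i ((l γ)⁻) with hdn
  have hdp_mono : ∀ γ γ', γ ≤ γ' → dp γ ≤ dp γ' := by
    intro γ γ' hγ
    refine iMono i hi_sup ?_
    rw [← hppos γ γ' hγ]
    exact ((hP γ).2 _ (posPart_nonneg _)).2
  have hdn_mono : ∀ γ γ', γ ≤ γ' → dn γ ≤ dn γ' := by
    intro γ γ' hγ
    refine iMono i hi_sup ?_
    rw [← hpneg γ γ' hγ]
    exact ((hP γ).2 _ (negPart_nonneg _)).2
  have hdp0 : ∀ γ, 0 ≤ dp γ := fun γ => iNonneg i hi_sup (posPart_nonneg _)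
  have hdn0 : ∀ γ, 0 ≤ dn γ := fun γ => iNonneg i hi_sup (negPart_nonneg _)
  have hdp_disj : ∀ γ γ', γ ≤ γ' → (dp γ' - dp γ) ⊓ dp γ = 0 := by
    intro γ γ' hγ
    have h1 : dp γ' - dp γ = i ((l γ')⁺ - P γ ((l γ')⁺)) := by
      rw [map_sub, hppos γ γ' hγ]
    have h2 : dp γ = i (P γ ((l γ')⁺)) := by rw [hppos γ γ' hγ]
    rw [h1, h2, ← iInf2 i hi_sup]
    have h3 : ((l γ')⁺ - P γ ((l γ')⁺)) ⊓ P γ ((l γ')⁺) = 0 := by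
      rw [inf_comm]
      exact bpDisj (hP γ) (posPart_nonneg _) (posPart_nonneg _)
    rw [h3, map_zero]
  have hdn_disj : ∀ γ γ', γ ≤ γ' → (dn γ' - dn γ) ⊓ dn γ = 0 := by
    intro γ γ' hγ
    have h1 : dn γ' - dn γ = i ((l γ')⁻ - P γ ((l γ')⁻)) := by
      rw [map_sub, hpneg γ γ' hγ]
    have h2 : dn γ = i (P γ ((l γ')⁻)) := by rw [hpneg γ γ' hγ]
    rw [h1, h2, ← iInf2 i hi_sup]
    have h3 : ((l γ')⁻ - P γ ((l γ')⁻)) ⊓ P γ ((l γ')⁻) = 0 := by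
      rw [inf_comm]
      exact bpDisj (hP γ) (negPart_nonneg _) (negPart_nonneg _)
    rw [h3, map_zero]
  obtain ⟨up, hup⟩ := supExists hFded hFlat hdp_mono hdp0 hdp_disj
  obtain ⟨un, hun⟩ := supExists hFded hFlat hdn_mono hdn0 hdn_disj
  refine ⟨up - un, ?_⟩
  set y : F := up - un with hy
  -- K1 part: (up - dp γ) and (un - dn γ) are disjoint from the band of P γ
  have hKp : ∀ (dd : Γ → F) (uu : F), (∀ γ γ', γ ≤ γ' → dd γ ≤ dd γ') →
      (∀ γ γ', γ ≤ γ' → ∀ z : E, 0 ≤ z → (dd γ' - dd γ) ⊓ i (P γ z) = 0) →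
      IsLUB (Set.range dd) uu →
      ∀ γ (z : E), 0 ≤ z → (uu - dd γ) ⊓ i (P γ z) = 0 := by
    intro dd uu hmono hdisj hlub γ z hz
    haveI : Nonempty {γ' // γ ≤ γ'} := ⟨⟨γ, le_refl γ⟩⟩
    have hres : IsLUB (Set.range fun p : {γ' // γ ≤ γ'} => dd p.val) uu := by
      constructor
      · rintro v ⟨p, rfl⟩; exact hlub.1 ⟨p.val, rfl⟩
      · intro c hc
        refine hlub.2 ?_
        rintro v ⟨γ₀, rfl⟩
        obtain ⟨γ'', h1, h2⟩ := directed_of (· ≤ ·) γ₀ γ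
        exact (hmono γ₀ γ'' h1).trans (hc ⟨⟨γ'', h2⟩, rfl⟩)
    have htr := myIsLUB_add _ uu (-(dd γ)) hres
    have hinf := myIsLUB_inf _ _ (i (P γ z)) htr
    have hall0 : ∀ v ∈ ((fun v => v ⊓ i (P γ z)) ''
        ((fun v => v + -(dd γ)) '' (Set.range fun p : {γ' // γ ≤ γ'} => dd p.val))), v = 0 := by
      rintro v ⟨u, ⟨u', ⟨p, rfl⟩, rfl⟩, rfl⟩
      show (dd p.val + -(dd γ)) ⊓ i (P γ z) = 0
      have heq : dd p.val + -(dd γ) = dd p.val - dd γ := by abel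
      rw [heq]
      exact hdisj γ p.val p.2 z hz
    have hmem : (dd γ + -(dd γ)) ⊓ i (P γ z) ∈ ((fun v => v ⊓ i (P γ z)) ''
        ((fun v => v + -(dd γ)) '' (Set.range fun p : {γ' // γ ≤ γ'} => dd p.val))) :=
      ⟨dd γ + -(dd γ), ⟨dd γ, ⟨⟨γ, le_refl γ⟩, rfl⟩, rfl⟩, rfl⟩
    have h0mem := hall0 _ hmem
    have hle : (uu + -(dd γ)) ⊓ i (P γ z) ≤ 0 := hinf.2 (by
      intro v hv
      rw [hall0 v hv])
    have hge : (0:F) ≤ (uu + -(dd γ)) ⊓ i (P γ z) := h0mem ▸ hinf.1 hmem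
    rw [sub_eq_add_neg]
    exact le_antisymm hle hge
  have hdpPdisj : ∀ γ γ', γ ≤ γ' → ∀ z : E, 0 ≤ z → (dp γ' - dp γ) ⊓ i (P γ z) = 0 := by
    intro γ γ' hγ z hz
    have h1 : dp γ' - dp γ = i ((l γ')⁺ - P γ ((l γ')⁺)) := by
      rw [map_sub, hppos γ γ' hγ]
    rw [h1, ← iInf2 i hi_sup]
    have h3 : ((l γ')⁺ - P γ ((l γ')⁺)) ⊓ P γ z = 0 := by
      rw [inf_comm]
      exact bpDisj (hP γ) hz (posPart_nonneg _)
    rw [h3, map_zero]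
  have hdnPdisj : ∀ γ γ', γ ≤ γ' → ∀ z : E, 0 ≤ z → (dn γ' - dn γ) ⊓ i (P γ z) = 0 := by
    intro γ γ' hγ z hz
    have h1 : dn γ' - dn γ = i ((l γ')⁻ - P γ ((l γ')⁻)) := by
      rw [map_sub, hpneg γ γ' hγ]
    rw [h1, ← iInf2 i hi_sup]
    have h3 : ((l γ')⁻ - P γ ((l γ')⁻)) ⊓ P γ z = 0 := by
      rw [inf_comm]
      exact bpDisj (hP γ) hz (negPart_nonneg _)
    rw [h3, map_zero]
  have hK1 : ∀ γ (z : E), 0 ≤ z → |y - i (l γ)| ⊓ i (P γ z) = 0 := by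
    intro γ z hz
    have hA := hKp dp up hdp_mono hdpPdisj hup γ z hz
    have hB := hKp dn un hdn_mono hdnPdisj hun γ z hz
    have hA0 : 0 ≤ up - dp γ := sub_nonneg.mpr (hup.1 ⟨γ, rfl⟩)
    have hB0 : 0 ≤ un - dn γ := sub_nonneg.mpr (hun.1 ⟨γ, rfl⟩)
    have hiz0 : 0 ≤ i (P γ z) := iNonneg i hi_sup ((hP γ).2 z hz).1
    have hyd : y - i (l γ) = (up - dp γ) - (un - dn γ) := by
      have hil : i (l γ) = dp γ - dn γ := by
        rw [hdp, hdn, ← map_sub, posPart_sub_negPart]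
      rw [hy, hil]
      abel
    have habs : |y - i (l γ)| ≤ (up - dp γ) + (un - dn γ) := by
      rw [hyd, sub_eq_add_neg]
      refine (abs_add_le _ _).trans ?_
      rw [abs_neg, abs_of_nonneg hA0, abs_of_nonneg hB0]
    refine le_antisymm ?_ (le_inf (abs_nonneg _) hiz0)
    calc |y - i (l γ)| ⊓ i (P γ z)
        ≤ ((up - dp γ) + (un - dn γ)) ⊓ i (P γ z) := inf_le_inf_right _ habs
      _ = 0 := myDisjAdd hA0 hB0 hiz0 hA hB
  -- disjointness in E of |v - P γ v| with P γ z
  have hEdisj : ∀ γ (v z : E), 0 ≤ z → |v - P γ v| ⊓ P γ z = 0 := by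
    intro γ v z hz
    have hv : v⁺ - v⁻ = v := posPart_sub_negPart v
    have h0 : P γ (v⁺) - P γ (v⁻) = P γ v := by rw [← map_sub, hv]
    have h1 : v - P γ v = (v⁺ - P γ (v⁺)) - (v⁻ - P γ (v⁻)) := by
      calc v - P γ v = (v⁺ - v⁻) - (P γ (v⁺) - P γ (v⁻)) := by rw [hv, h0]
        _ = (v⁺ - P γ (v⁺)) - (v⁻ - P γ (v⁻)) := by abel
    have ha0 : 0 ≤ v⁺ - P γ (v⁺) := sub_nonneg.mpr ((hP γ).2 _ (posPart_nonneg v)).2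
    have hb0 : 0 ≤ v⁻ - P γ (v⁻) := sub_nonneg.mpr ((hP γ).2 _ (negPart_nonneg v)).2
    have hz0 : 0 ≤ P γ z := ((hP γ).2 z hz).1
    have hda : (v⁺ - P γ (v⁺)) ⊓ P γ z = 0 := by
      rw [inf_comm]; exact bpDisj (hP γ) hz (posPart_nonneg v)
    have hdb : (v⁻ - P γ (v⁻)) ⊓ P γ z = 0 := by
      rw [inf_comm]; exact bpDisj (hP γ) hz (negPart_nonneg v)
    have habs : |v - P γ v| ≤ (v⁺ - P γ (v⁺)) + (v⁻ - P γ (v⁻)) := by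
      rw [h1, sub_eq_add_neg]
      refine (abs_add_le _ _).trans ?_
      rw [abs_neg, abs_of_nonneg ha0, abs_of_nonneg hb0]
    refine le_antisymm ?_ (le_inf (abs_nonneg _) hz0)
    calc |v - P γ v| ⊓ P γ z ≤ ((v⁺ - P γ (v⁺)) + (v⁻ - P γ (v⁻))) ⊓ P γ z :=
          inf_le_inf_right _ habs
      _ = 0 := myDisjAdd ha0 hb0 hz0 hda hdb
  -- destructure the order convergence witnesses
  have hl' := hl
  simp only [OrderConvNet] at hl'
  choose Bn leBn yn hBne hBrefl hBtrans hBdir hBanti hBglb hBbnd using hl'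
  -- now prove uo-convergence
  intro w hw
  -- the band projection values q γ of w
  have hqex : ∀ γ, ∃ qv, IsLUB {v : F | ∃ z : E, 0 ≤ z ∧ v = w ⊓ i (P γ z)} qv := by
    intro γ
    refine hFded _ ⟨0, ⟨0, le_refl 0, ?_⟩⟩ ⟨w, ?_⟩
    · rw [map_zero, map_zero, inf_of_le_right hw]
    · rintro v ⟨z, hz, rfl⟩; exact inf_le_left
  choose q hq using hqex
  have hq0 : ∀ γ, 0 ≤ q γ := by
    intro γ
    refine (hq γ).1 ⟨0, le_refl 0, ?_⟩
    rw [map_zero, map_zero, inf_of_le_right hw]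
  have hq_del : ∀ γ (c : F), 0 ≤ c → c ≤ w → (∀ z : E, 0 ≤ z → c ⊓ i (P γ z) = 0) →
      c ≤ w - q γ := by
    intro γ c hc0 hcw hdis
    have h1 : q γ ≤ w - c := by
      refine (hq γ).2 ?_
      rintro v ⟨z, hz, rfl⟩
      have hiz0 : 0 ≤ i (P γ z) := iNonneg i hi_sup ((hP γ).2 z hz).1
      have h2 : (w ⊓ i (P γ z)) ⊓ c = 0 := by
        refine le_antisymm ?_ (le_inf (le_inf hw hiz0) hc0)
        calc (w ⊓ i (P γ z)) ⊓ c ≤ i (P γ z) ⊓ c := inf_le_inf_right c inf_le_right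
          _ = c ⊓ i (P γ z) := inf_comm _ _
          _ = 0 := hdis z hz
      have h3 : w ⊓ i (P γ z) + c ≤ w := myDisjSumLe h2 inf_le_left hcw
      exact le_sub_iff_add_le.mpr h3
    have h4 : q γ + c ≤ w := le_sub_iff_add_le.mp h1
    rw [add_comm] at h4
    exact le_sub_iff_add_le.mpr h4
  have hq_least : ∀ c : F, (∀ γ, q γ ≤ c) → w ≤ c := by
    intro c hc
    have hc0 : 0 ≤ c := (hq0 (Classical.arbitrary Γ)).trans (hc _)
    have stepA : ∀ z : E, 0 ≤ z → i z ⊓ w ≤ c := by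
      intro z hz
      have hlub1 : IsLUB (Set.range fun γ => i (P γ z)) (i z) :=
        iIsLUB i hi_sup hi_inj hi_ideal (fun γ => P γ z) z (hP_sup z hz)
      have hlub2 := myIsLUB_inf _ _ w hlub1
      refine hlub2.2 ?_
      rintro v ⟨u, ⟨γ, rfl⟩, rfl⟩
      have hmem : w ⊓ i (P γ z) ∈ {v : F | ∃ z' : E, 0 ≤ z' ∧ v = w ⊓ i (P γ z')} :=
        ⟨z, hz, rfl⟩
      have h5 : i (P γ z) ⊓ w ≤ q γ := by
        rw [inf_comm]
        exact (hq γ).1 hmem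
      exact h5.trans (hc γ)
    have hr0 : w - w ⊓ c = 0 := by
      by_contra hne
      have hrpos : 0 < w - w ⊓ c :=
        lt_of_le_of_ne (sub_nonneg.mpr inf_le_left) (Ne.symm hne)
      obtain ⟨z, hz1, hz2⟩ := hi_dense _ hrpos
      have hizpos : i (z⁺) = i z := by
        rw [iPos i hi_sup]
        exact posPart_eq_self.mpr (le_of_lt hz1)
      have hz0' : 0 ≤ z⁺ := posPart_nonneg z
      have hind : ∀ n : ℕ, n • (i z) ≤ w ⊓ c := by
        intro n
        induction n with
        | zero => rw [zero_nsmul]; exact le_inf hw hc0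
        | succ n ih =>
            have h5 : (n + 1) • (i z) ≤ w := by
              rw [succ_nsmul]
              calc n • (i z) + i z ≤ w ⊓ c + (w - w ⊓ c) := add_le_add ih hz2
                _ = w := by abel
            have h6 : i ((n + 1) • z⁺) ⊓ w ≤ c := stepA _ (nsmul_nonneg hz0' _)
            have h7 : i ((n + 1) • z⁺) = (n + 1) • (i z) := by rw [map_nsmul, hizpos]
            rw [h7, inf_of_le_left h5] at h6
            exact le_inf h5 h6
      have harch : i z ≤ 0 := myArch hFded (fun n => (hind n).trans inf_le_left)
      exact absurd (hz1.trans_le harch) (lt_irrefl 0)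
    have h8 : w = w ⊓ c := sub_eq_zero.mp hr0
    exact h8 ▸ inf_le_right
  -- the core estimate
  have hcore : ∀ (γ : Γ) (a : A),
      |i (x a) - y| ⊓ w ≤ i |P γ (x a) - l γ| + (w - q γ) := by
    intro γ a
    set sdef := i (x a - P γ (x a)) - (y - i (l γ)) with hsdef
    have hxy : i (x a) - y = i (P γ (x a) - l γ) + sdef := by
      rw [hsdef]
      simp only [map_sub]
      abel
    have hsd : ∀ z : E, 0 ≤ z → |sdef| ⊓ i (P γ z) = 0 := by
      intro z hz
      have hiz0 : 0 ≤ i (P γ z) := iNonneg i hi_sup ((hP γ).2 z hz).1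
      have h1 : |i (x a - P γ (x a))| ⊓ i (P γ z) = 0 := by
        rw [← iAbs i hi_sup, ← iInf2 i hi_sup, hEdisj γ (x a) z hz, map_zero]
      have h2 := hK1 γ z hz
      have h3 : |sdef| ≤ |i (x a - P γ (x a))| + |y - i (l γ)| := by
        rw [hsdef, sub_eq_add_neg]
        exact (abs_add_le _ _).trans (by rw [abs_neg])
      refine le_antisymm ?_ (le_inf (abs_nonneg _) hiz0)
      calc |sdef| ⊓ i (P γ z)
          ≤ (|i (x a - P γ (x a))| + |y - i (l γ)|) ⊓ i (P γ z) := inf_le_inf_right _ h3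
        _ = 0 := myDisjAdd (abs_nonneg _) (abs_nonneg _) hiz0 h1 h2
    have hsw : |sdef| ⊓ w ≤ w - q γ := by
      refine hq_del γ _ (le_inf (abs_nonneg _) hw) inf_le_right ?_
      intro z hz
      have hiz0 : 0 ≤ i (P γ z) := iNonneg i hi_sup ((hP γ).2 z hz).1
      refine le_antisymm ?_ (le_inf (le_inf (abs_nonneg _) hw) hiz0)
      calc |sdef| ⊓ w ⊓ i (P γ z) ≤ |sdef| ⊓ i (P γ z) :=
            inf_le_inf_right _ inf_le_left
        _ = 0 := hsd z hz
    calc |i (x a) - y| ⊓ w = |i (P γ (x a) - l γ) + sdef| ⊓ w := by rw [hxy]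
      _ ≤ (|i (P γ (x a) - l γ)| + |sdef|) ⊓ w := inf_le_inf_right w (abs_add_le _ _)
      _ ≤ |i (P γ (x a) - l γ)| ⊓ w + |sdef| ⊓ w :=
          myInfAddLe (abs_nonneg _) (abs_nonneg _) hw
      _ ≤ i |P γ (x a) - l γ| + (w - q γ) := by
          refine add_le_add ?_ hsw
          have h9 : |i (P γ (x a) - l γ)| = i |P γ (x a) - l γ| := (iAbs i hi_sup _).symm
          exact inf_le_left.trans (le_of_eq h9)
  -- the set of eventual bounds
  set Y : Set F := {c : F | ∃ a₀ : A, ∀ a : A, a₀ ≤ a → |i (x a) - y| ⊓ w ≤ c} with hYdef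
  have hYmem : ∀ γ (b : Bn γ), (i (yn γ b) + (w - q γ)) ∈ Y := by
    intro γ b
    obtain ⟨a₀, ha₀⟩ := hBbnd γ b
    refine ⟨a₀, fun a ha => ?_⟩
    refine (hcore γ a).trans (add_le_add_left ?_ _)
    exact iMono i hi_sup (ha₀ a ha)
  have hY0 : ∀ c ∈ Y, (0:F) ≤ c := by
    rintro c ⟨a₀, ha₀⟩
    exact (le_inf (abs_nonneg _) hw).trans (ha₀ a₀ (le_refl a₀))
  refine ⟨↥Y, fun c c' => (c' : F) ≤ (c : F), fun c => (c : F), ?_, ?_, ?_, ?_, ?_, ?_, ?_⟩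
  · have γ₀ : Γ := Classical.arbitrary Γ
    obtain ⟨b₀⟩ := hBne γ₀
    exact ⟨⟨_, hYmem γ₀ b₀⟩⟩
  · exact fun b => le_refl _
  · exact fun b₁ b₂ b₃ h1 h2 => h2.trans h1
  · intro c₁ c₂
    obtain ⟨a₁, ha₁⟩ := c₁.2
    obtain ⟨a₂, ha₂⟩ := c₂.2
    obtain ⟨a₃, h1, h2⟩ := directed_of (· ≤ ·) a₁ a₂
    exact ⟨⟨(c₁ : F) ⊓ (c₂ : F),
      ⟨a₃, fun a ha => le_inf (ha₁ a (h1.trans ha)) (ha₂ a (h2.trans ha))⟩⟩,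
      inf_le_left, inf_le_right⟩
  · exact fun b₁ b₂ h => h
  · constructor
    · rintro v ⟨c, rfl⟩
      exact hY0 c c.2
    · intro m hm
      have hm' : ∀ c ∈ Y, m ≤ c := fun c hc => hm ⟨⟨c, hc⟩, rfl⟩
      have h1 : ∀ γ, m ≤ w - q γ := by
        intro γ
        haveI : Nonempty (Bn γ) := hBne γ
        have h2 : ∀ b : Bn γ, m - (w - q γ) ≤ i (yn γ b) := by
          intro b
          exact sub_le_iff_le_add.mpr (hm' _ (hYmem γ b))
        have hglb' := iGLBzero i hi_sup hi_inj hi_ideal (yn γ) (hBglb γ)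
        have h3 : m - (w - q γ) ≤ 0 := hglb'.2 (by rintro v ⟨b, rfl⟩; exact h2 b)
        exact sub_nonpos.mp h3
      have h4 : ∀ γ, q γ ≤ w - m := by
        intro γ
        have h5 : m + q γ ≤ w := le_sub_iff_add_le.mp (h1 γ)
        rw [add_comm] at h5
        exact le_sub_iff_add_le.mpr h5
      have h6 : w ≤ w - m := hq_least _ h4
      have h7 : w + m ≤ w := by
        have h8 := le_sub_iff_add_le.mp h6
        exact h8
      exact (add_le_iff_nonpos_right w).mp h7
  · intro c
    obtain ⟨a₀, ha₀⟩ := c.2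
    refine ⟨a₀, fun a ha => ?_⟩
    have h8 : (0:F) ≤ |i (x a) - y| ⊓ w := le_inf (abs_nonneg _) hw
    rw [sub_zero, abs_of_nonneg h8]
    exact ha₀ a ha
end

section
/- Let E be a Dedekind complete vector lattice, (P_γ)_{γ∈Γ} a net of band projections on E with P_γ ↑ I, and (x_α)_{α∈A} a net in E. If for each γ the net (P_γ x_α)_{α∈A} is order convergent in E, then (x_α)_{α∈A} is uo-Cauchy in E, i.e. the net (x_α − x_β), indexed by pairs (α, β) ∈ A × A, uo-converges to 0. -/
universe u

section Aux

variable {E : Type*} [Lattice E] [AddCommGroup E] [Module ℝ E]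
  [CovariantClass E E (· + ·) (· ≤ ·)]

lemma IsBandProjection.monotone' {P : E →ₗ[ℝ] E} (hP : IsBandProjection P) :
    Monotone P := fun u v h => by
  have h0 : (0 : E) ≤ P (v - u) := (hP.2 (v - u) (sub_nonneg.2 h)).1
  rw [map_sub] at h0
  exact sub_nonneg.1 h0

lemma IsBandProjection.abs_map {P : E →ₗ[ℝ] E} (hP : IsBandProjection P) (u : E) :
    P |u| = |P u| := by
  have hpos : (0 : E) ≤ P u⁺ := (hP.2 _ (posPart_nonneg u)).1
  have hneg : (0 : E) ≤ P u⁻ := (hP.2 _ (negPart_nonneg u)).1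
  have hdisj : P u⁺ ⊓ P u⁻ = 0 := by
    refine le_antisymm ?_ (le_inf hpos hneg)
    calc P u⁺ ⊓ P u⁻ ≤ u⁺ ⊓ u⁻ :=
          inf_le_inf (hP.2 _ (posPart_nonneg u)).2 (hP.2 _ (negPart_nonneg u)).2
      _ = 0 := posPart_inf_negPart_eq_zero u
  have h1 : P u = P u⁺ - P u⁻ := by
    rw [← map_sub, posPart_sub_negPart]
  have h2 : P |u| = P u⁺ + P u⁻ := by
    rw [← map_add, posPart_add_negPart]
  have h5 : P u⁻ ⊔ P u⁺ - P u⁻ ⊓ P u⁺ = |P u⁺ - P u⁻| := sup_sub_inf_eq_abs_sub _ _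
  have h6 : P u⁻ ⊓ P u⁺ + (P u⁻ ⊔ P u⁺) = P u⁻ + P u⁺ := inf_add_sup _ _
  have hd' : P u⁻ ⊓ P u⁺ = 0 := by rw [inf_comm]; exact hdisj
  rw [h1, h2, ← h5, hd', sub_zero, add_comm, ← h6, hd', zero_add]

end Aux

/-- Theorem. Let `E` be a Dedekind complete vector lattice, `(P_γ)_{γ ∈ Γ}` a net of band
projections on `E` with `P_γ ↑ I`, and `(x_α)_{α ∈ A}` a net in `E`.  If for each `γ`
the net `(P_γ x_α)_α` is order convergent in `E`, then `(x_α)` is uo-Cauchy in `E`,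
i.e. the net `(x_α - x_β)` indexed by pairs `(α, β) ∈ A × A` uo-converges to `0`. -/
theorem uo_cauchy_from_net_of_band_projections
    {E : Type u} [Lattice E] [AddCommGroup E] [Module ℝ E]
    [CovariantClass E E (· + ·) (· ≤ ·)]
    {Γ : Type*} [Preorder Γ] [IsDirected Γ (· ≤ ·)] [Nonempty Γ]
    {A : Type*} [Preorder A] [IsDirected A (· ≤ ·)] [Nonempty A]
    (hE : DedekindComplete E)
    (P : Γ → E →ₗ[ℝ] E)
    (hP : ∀ γ, IsBandProjection (P γ))
    (hP_mono : ∀ γ γ' : Γ, γ ≤ γ' → ∀ x : E, 0 ≤ x → P γ x ≤ P γ' x)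
    (hP_sup : ∀ x : E, 0 ≤ x → IsLUB (Set.range fun γ => P γ x) x)
    (x : A → E)
    (hconv : ∀ γ, ∃ l : E, OrderConvNet (fun a => P γ (x a)) l) :
    UoConvNet (fun p : A × A => x p.1 - x p.2) (0 : E) := by
  intro w hw
  classical
  set D : Set E := {d | 0 ≤ d ∧ ∃ p₀ : A × A, ∀ p : A × A, p₀ ≤ p →
      |x p.1 - x p.2| ⊓ w ≤ d} with hD
  have hwD : w ∈ D := ⟨hw, Classical.arbitrary (A × A), fun p _ => inf_le_right⟩
  refine ⟨D, (fun d d' => (d' : E) ≤ (d : E)), (fun d => (d : E)), ⟨⟨w, hwD⟩⟩,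
    fun b => le_refl _, fun b₁ b₂ b₃ h12 h23 => le_trans h23 h12, ?_, fun b₁ b₂ h => h,
    ?_, ?_⟩
  · -- directedness
    rintro ⟨d₁, hd₁0, p₁, hp₁⟩ ⟨d₂, hd₂0, p₂, hp₂⟩
    obtain ⟨a₃, ha₁, ha₂⟩ := directed_of (· ≤ ·) p₁.1 p₂.1
    obtain ⟨b₃, hb₁, hb₂⟩ := directed_of (· ≤ ·) p₁.2 p₂.2
    refine ⟨⟨d₁ ⊓ d₂, le_inf hd₁0 hd₂0, (a₃, b₃), fun p hp => ?_⟩, inf_le_left, inf_le_right⟩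
    exact le_inf (hp₁ p ⟨le_trans ha₁ hp.1, le_trans hb₁ hp.2⟩)
      (hp₂ p ⟨le_trans ha₂ hp.1, le_trans hb₂ hp.2⟩)
  · -- IsGLB
    constructor
    · rintro z ⟨⟨d, hd0, -⟩, rfl⟩
      exact hd0
    · intro c hc
      have hcD : ∀ d ∈ D, c ≤ d := by
        rintro d hd
        exact hc ⟨⟨d, hd⟩, rfl⟩
      -- first show c ≤ w - P γ w for each γ
      have key : ∀ γ : Γ, c ≤ w - P γ w := by
        intro γ
        obtain ⟨l, B, leB, y, hBne, hrefl, htrans, hdir, hanti, hglb, hev⟩ := hconv γ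
        have hy0 : ∀ b : B, (0 : E) ≤ y b := fun b => hglb.1 ⟨b, rfl⟩
        have hu0 : (0 : E) ≤ w - P γ w := sub_nonneg.2 ((hP γ).2 w hw).2
        have hmem : ∀ b b' : B, y b + y b' + (w - P γ w) ∈ D := by
          intro b b'
          refine ⟨add_nonneg (add_nonneg (hy0 b) (hy0 b')) hu0, ?_⟩
          obtain ⟨a₀, ha₀⟩ := hev b
          obtain ⟨a₁, ha₁⟩ := hev b'
          refine ⟨(a₀, a₁), fun p hp => ?_⟩
          set z : E := |x p.1 - x p.2| ⊓ w with hz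
          have hz0 : (0 : E) ≤ z := le_inf (abs_nonneg _) hw
          have hzw : z ≤ w := inf_le_right
          have hstep1 : z ≤ P γ z + (w - P γ w) := by
            have h' : P γ (w - z) ≤ w - z := ((hP γ).2 (w - z) (sub_nonneg.2 hzw)).2
            rw [map_sub] at h'
            have hkey : z - P γ z ≤ w - P γ w := by
              calc z - P γ z = (z - P γ w) + (P γ w - P γ z) := by abel
                _ ≤ (z - P γ w) + (w - z) := add_le_add_right h' _
                _ = w - P γ w := by abel
            calc z = P γ z + (z - P γ z) := by abel
              _ ≤ P γ z + (w - P γ w) := add_le_add_right hkey _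
          have hstep2 : P γ z ≤ |P γ (x p.1) - P γ (x p.2)| := by
            calc P γ z ≤ P γ |x p.1 - x p.2| := (hP γ).monotone' inf_le_left
              _ = |P γ (x p.1 - x p.2)| := (hP γ).abs_map _
              _ = |P γ (x p.1) - P γ (x p.2)| := by rw [map_sub]
          have hstep3 : |P γ (x p.1) - P γ (x p.2)| ≤ y b + y b' := by
            calc |P γ (x p.1) - P γ (x p.2)|
                = |(P γ (x p.1) - l) + (l - P γ (x p.2))| := by abel_nf
              _ ≤ |P γ (x p.1) - l| + |l - P γ (x p.2)| := abs_add_le _ _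
              _ = |P γ (x p.1) - l| + |P γ (x p.2) - l| := by rw [abs_sub_comm l]
              _ ≤ y b + y b' := add_le_add (ha₀ p.1 hp.1) (ha₁ p.2 hp.2)
          calc |x p.1 - x p.2| ⊓ w ≤ P γ z + (w - P γ w) := hstep1
            _ ≤ (y b + y b') + (w - P γ w) :=
                add_le_add_left (le_trans hstep2 hstep3) _
        -- peel off the y's
        have step1 : ∀ b' : B, c ≤ y b' + (w - P γ w) := by
          intro b'
          have hlb : c - (y b' + (w - P γ w)) ∈ lowerBounds (Set.range y) := by
            rintro z ⟨b, rfl⟩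
            have := hcD _ (hmem b b')
            calc c - (y b' + (w - P γ w)) ≤ (y b + y b' + (w - P γ w)) - (y b' + (w - P γ w)) :=
                  sub_le_sub_right this _
              _ = y b := by abel
          exact sub_nonpos.1 (hglb.2 hlb)
        have hlb2 : c - (w - P γ w) ∈ lowerBounds (Set.range y) := by
          rintro z ⟨b', rfl⟩
          exact sub_le_iff_le_add.2 (step1 b')
        exact sub_nonpos.1 (hglb.2 hlb2)
      -- now use hP_sup
      have : ∀ γ : Γ, P γ w ≤ w - c := by
        intro γ
        have := key γ
        calc P γ w = w - (w - P γ w) := by abel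
          _ ≤ w - c := sub_le_sub_left (key γ) w
      have hub : w ≤ w - c := (hP_sup w hw).2 (by rintro z ⟨γ, rfl⟩; exact this γ)
      have : c ≤ 0 := by
        have := sub_le_sub_left hub w
        simpa using this
      exact this
  · -- eventual bounds
    rintro ⟨d, hd0, p₀, hp₀⟩
    refine ⟨p₀, fun p hp => ?_⟩
    simp only [sub_zero]
    rw [abs_of_nonneg (le_inf (abs_nonneg _) hw)]
    exact hp₀ p hp
end

section
/- In E = ℓ∞ (the vector lattice of bounded real sequences with pointwise order), let A = {(p, q) ∈ ℕ × ℕ : p ≤ q} be ordered coordinatewise, let x_{(p,q)} = q · Σ_{k=p}^{q} e_k where (e_k) are the standard unit sequences, and let P_k be the band projection onto the band of sequences vanishing outside {1, …, k}. Then: (i) for every k, the net (P_k x_α)_{α∈A} order converges to 0 in ℓ∞; (ii) for every α₀ ∈ A, the tail {x_α : α ≥ α₀} is not order bounded in ℓ∞; consequently the net (x_α)_{α∈A} is not order convergent. -/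
open BoundedContinuousFunction

universe u

/-- The index set `A = {(p, q) ∈ ℕ × ℕ : 1 ≤ p ≤ q}`, ordered coordinatewise. -/
abbrev IndexA : Type := {pq : ℕ × ℕ // 1 ≤ pq.1 ∧ pq.1 ≤ pq.2}

/-- The net `x_{(p,q)} = q · ∑_{k=p}^{q} e_k` in `ℓ∞ = ℕ →ᵇ ℝ`
(bounded real sequences with the pointwise order). -/
noncomputable def xNet (a : IndexA) : ℕ →ᵇ ℝ :=
  ofNormedAddCommGroup (fun n => if a.1.1 ≤ n ∧ n ≤ a.1.2 then (a.1.2 : ℝ) else 0)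
    continuous_of_discreteTopology (a.1.2 : ℝ)
    (by
      intro n
      try dsimp only
      split_ifs
      · simp
      · simp)

/-- `P_k`, the band projection of `ℓ∞` onto the band of sequences vanishing outside
`{1, …, k}`. -/
noncomputable def projBand (k : ℕ) (x : ℕ →ᵇ ℝ) : ℕ →ᵇ ℝ :=
  ofNormedAddCommGroup (fun n => if 1 ≤ n ∧ n ≤ k then x n else 0)
    continuous_of_discreteTopology ‖x‖
    (by
      intro n
      try dsimp only
      split_ifs
      · exact x.norm_coe_le_norm n
      · simp [norm_nonneg])

lemma tail_unbounded (a₀ : IndexA) :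
    ¬ ∃ b : ℕ →ᵇ ℝ, ∀ a : IndexA, a₀ ≤ a → |xNet a| ≤ b := by
  rintro ⟨b, hb⟩
  set n : ℕ := max a₀.1.2 (⌊‖b‖⌋₊ + 1) with hn
  have hp : a₀.1.1 ≤ n := le_trans a₀.2.2 (le_max_left _ _)
  set a : IndexA := ⟨(a₀.1.1, n), a₀.2.1, hp⟩ with ha
  have hle : a₀ ≤ a := ⟨le_refl _, le_max_left _ _⟩
  have h1 : |xNet a| n ≤ b n := hb a hle n
  have h2 : xNet a n = (n : ℝ) := by
    show (if a.1.1 ≤ n ∧ n ≤ a.1.2 then (a.1.2 : ℝ) else 0) = n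
    simp [ha, hp]
  have h3 : |xNet a| n = |xNet a n| := rfl
  have h4 : b n ≤ ‖b‖ := le_trans (le_abs_self _) (b.norm_coe_le_norm n)
  have h5 : ‖b‖ < n := by
    have := Nat.lt_floor_add_one ‖b‖
    calc ‖b‖ < (⌊‖b‖⌋₊ + 1 : ℕ) := by exact_mod_cast this
      _ ≤ n := by exact_mod_cast le_max_right _ _
  rw [h3, h2] at h1
  have : |(n : ℝ)| = (n : ℝ) := abs_of_nonneg (Nat.cast_nonneg n)
  linarith [h1, h4, h5, this.symm.le.trans h1]

/-- In `E = ℓ∞`: (i) for every `k` the net `(P_k x_α)_{α ∈ A}` order converges to `0`;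
(ii) for every `α₀ ∈ A` the tail `{x_α : α ≥ α₀}` is not order bounded in `ℓ∞`;
consequently the net `(x_α)_{α ∈ A}` is not order convergent. -/
theorem ellInfty_counterexample :
    (∀ k : ℕ, OrderConvNet (fun a : IndexA => projBand k (xNet a)) 0) ∧
    (∀ a₀ : IndexA, ¬ ∃ b : ℕ →ᵇ ℝ, ∀ a : IndexA, a₀ ≤ a → |xNet a| ≤ b) ∧
    ¬ ∃ l : ℕ →ᵇ ℝ, OrderConvNet xNet l := by
  refine ⟨?_, tail_unbounded, ?_⟩
  · intro k
    refine ⟨PUnit, fun _ _ => True, fun _ => 0, ⟨PUnit.unit⟩, fun _ => trivial,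
      fun _ _ _ _ _ => trivial, fun _ _ => ⟨PUnit.unit, trivial, trivial⟩,
      fun _ _ _ => le_refl _, by simp [Set.range_const], ?_⟩
    intro _
    refine ⟨⟨(k + 1, k + 1), Nat.succ_le_succ (Nat.zero_le _), le_refl _⟩, ?_⟩
    rintro a ⟨hp, hq⟩
    have : projBand k (xNet a) = 0 := by
      apply BoundedContinuousFunction.ext
      intro n
      show (if 1 ≤ n ∧ n ≤ k then xNet a n else 0) = 0
      by_cases h : 1 ≤ n ∧ n ≤ k
      · simp only [h, if_true]
        show (if a.1.1 ≤ n ∧ n ≤ a.1.2 then (a.1.2 : ℝ) else 0) = 0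
        have : ¬ (a.1.1 ≤ n ∧ n ≤ a.1.2) := by
          rintro ⟨h1, _⟩
          have hk : k + 1 ≤ a.1.1 := hp
          have := le_trans (le_trans hk h1) h.2
          omega
        simp [this]
      · simp [h]
    simp [this]
  · rintro ⟨l, B, leB, y, ⟨b⟩, _, _, _, _, hglb, hconv⟩
    obtain ⟨a₀, ha₀⟩ := hconv b
    refine tail_unbounded a₀ ⟨y b + |l|, fun a ha => ?_⟩
    calc |xNet a| = |(xNet a - l) + l| := by ring_nf
      _ ≤ |xNet a - l| + |l| := (fun n => abs_add_le _ _)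
      _ ≤ y b + |l| := add_le_add_left (ha₀ a ha) _
end

section
/- Let E be a universally complete vector lattice with weak order unit e and let (x_α)_{α∈A} be an increasing net in E⁺. For each λ > 0 the supremum b_λ := sup_α P_{(x_α − λe)^+} e exists in E (all terms lie in the interval [0, e]). Then the supremum sup_α x_α exists in E if and only if inf_{λ∈(0,∞)} b_λ = 0. -/
set_option linter.unusedSectionVars false

section Helpers
variable {E : Type*} [Lattice E] [AddCommGroup E] [CovariantClass E E (· + ·) (· ≤ ·)]

lemma aux_inf_add_le_s7 (g a b : E) (hg : 0 ≤ g) (ha : 0 ≤ a) (hb : 0 ≤ b) :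
    g ⊓ (a + b) ≤ g ⊓ a + g ⊓ b := by
  rw [← sub_le_iff_le_add', sub_inf]
  apply sup_le
  · exact le_trans (sub_nonpos.2 inf_le_left) (le_inf hg hb)
  · exact le_inf (le_trans (sub_le_sub_right inf_le_left a) (by simpa using sub_le_self g ha))
      (sub_le_iff_le_add'.2 inf_le_right)

lemma aux_disj_add (g a b : E) (hg : 0 ≤ g) (ha : 0 ≤ a) (hb : 0 ≤ b)
    (hga : g ⊓ a = 0) (hgb : g ⊓ b = 0) : g ⊓ (a + b) = 0 :=
  le_antisymm (by simpa [hga, hgb] using aux_inf_add_le_s7 g a b hg ha hb)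
    (le_inf hg (add_nonneg ha hb))

lemma aux_disj_nsmul (g a : E) (hg : 0 ≤ g) (ha : 0 ≤ a) (hga : g ⊓ a = 0) (k : ℕ) :
    g ⊓ (k • a) = 0 := by
  induction k with
  | zero => rw [zero_nsmul]; exact inf_eq_right.2 hg
  | succ n ih => rw [succ_nsmul]; exact aux_disj_add g _ a hg (nsmul_nonneg ha n) ha ih hga

lemma aux_disj_of_le (g a a' : E) (hg : 0 ≤ g) (ha' : 0 ≤ a') (h : a' ≤ a)
    (hga : g ⊓ a = 0) : g ⊓ a' = 0 :=
  le_antisymm (hga ▸ inf_le_inf_left g h) (le_inf hg ha')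

lemma aux_add_of_disj (a b : E) (h : a ⊓ b = 0) : a + b = a ⊔ b := by
  have := inf_add_sup a b
  rw [h, zero_add] at this
  exact this.symm

end Helpers

/-- Theorem. Let `E` be a universally complete vector lattice with weak order unit `e`
and let `(x_α)_{α ∈ A}` be an increasing net in `E⁺`.  For `u ∈ E⁺`, `P_u` denotes the
band projection onto the band generated by `u`, given by `P_u z = sup_k (z ⊓ k u)`;
here `π α l = P_{(x_α - l e)⁺} e` and, for each `l > 0`,
`b l = sup_α P_{(x_α - l e)⁺} e` (these suprema exist since all terms lie in `[0, e]`).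
Then `sup_α x_α` exists in `E` if and only if `inf_{l ∈ (0,∞)} b l = 0`. -/
theorem sup_exists_iff_inf_band_projections_zero
    {E : Type*} [Lattice E] [AddCommGroup E] [Module ℝ E]
    [CovariantClass E E (· + ·) (· ≤ ·)] [PosSMulMono ℝ E]
    (hDed : DedekindComplete E) (hLat : LaterallyComplete E)
    (e : E) (he_pos : 0 ≤ e) (he_unit : ∀ x : E, 0 ≤ x → x ⊓ e = 0 → x = 0)
    {A : Type*} [Preorder A] [IsDirected A (· ≤ ·)] [Nonempty A]
    (x : A → E) (hx_pos : ∀ α, 0 ≤ x α) (hx_mono : Monotone x)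
    (π : A → ℝ → E)
    (hπ : ∀ α (l : ℝ),
      IsLUB (Set.range fun k : ℕ => e ⊓ (k • (x α - l • e)⁺)) (π α l))
    (b : ℝ → E)
    (hb : ∀ l : ℝ, 0 < l → IsLUB (Set.range fun α => π α l) (b l)) :
    (∃ s, IsLUB (Set.range x) s) ↔ IsGLB {z : E | ∃ l : ℝ, 0 < l ∧ z = b l} 0 := by
  classical
  obtain ⟨α₀⟩ := ‹Nonempty A›
  -- basic facts about π
  have hπ_nonneg : ∀ α (l : ℝ), 0 ≤ π α l := by
    intro α l
    have h0 : e ⊓ ((0 : ℕ) • (x α - l • e)⁺) = 0 := by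
      rw [zero_nsmul]; exact inf_eq_right.2 he_pos
    exact h0 ▸ (hπ α l).1 ⟨0, rfl⟩
  have hπ_le_e : ∀ α (l : ℝ), π α l ≤ e := by
    intro α l
    exact (hπ α l).2 (by rintro y ⟨k, rfl⟩; exact inf_le_left)
  have hu_mono : ∀ α {l l' : ℝ}, l ≤ l' → (x α - l' • e)⁺ ≤ (x α - l • e)⁺ := by
    intro α l l' h
    refine posPart_mono (sub_le_sub_left ?_ _)
    have h2 : (0:E) ≤ (l' - l) • e := smul_nonneg (by linarith) he_pos
    rw [sub_smul, sub_nonneg] at h2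
    exact h2
  have hπ_anti : ∀ α {l l' : ℝ}, l ≤ l' → π α l' ≤ π α l := by
    intro α l l' h
    refine (hπ α l').2 ?_
    rintro y ⟨k, rfl⟩
    exact le_trans (inf_le_inf_left e (nsmul_le_nsmul_right (hu_mono α h) k)) ((hπ α l).1 ⟨k, rfl⟩)
  -- key inequality : l • (e ⊓ k • u) ≤ x α for l > 0
  have key1 : ∀ α (l : ℝ), 0 < l → ∀ k : ℕ, l • (e ⊓ k • (x α - l • e)⁺) ≤ x α := by
    intro α l hl k
    set u := (x α - l • e)⁺ with hu
    set v := (x α - l • e)⁻ with hv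
    have hun : (0:E) ≤ u := posPart_nonneg _
    have hvn : (0:E) ≤ v := negPart_nonneg _
    have hle : (0:E) ≤ l • e := smul_nonneg hl.le he_pos
    have hv_le : v ≤ l • e := by
      rw [hv, negPart_def, neg_sub]
      exact sup_le (sub_le_self _ (hx_pos α)) hle
    set w0 := e ⊓ k • u with hw0
    have hw0n : (0:E) ≤ w0 := le_inf he_pos (nsmul_nonneg hun k)
    have hvu : v ⊓ u = 0 := by rw [inf_comm]; exact posPart_inf_negPart_eq_zero _
    have hvw0 : v ⊓ w0 = 0 :=
      aux_disj_of_le v (k • u) w0 hvn hw0n inf_le_right (aux_disj_nsmul v u hvn hun hvu k)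
    obtain ⟨n, hn⟩ := exists_nat_ge l
    have hwn : l • w0 ≤ (n : ℕ) • w0 := by
      rw [← Nat.cast_smul_eq_nsmul ℝ n w0]
      have h2 : (0:E) ≤ ((n:ℝ) - l) • w0 := smul_nonneg (by linarith) hw0n
      rw [sub_smul, sub_nonneg] at h2
      exact h2
    have hwv : l • w0 ⊓ v = 0 := by
      rw [inf_comm]
      exact aux_disj_of_le v ((n:ℕ) • w0) (l • w0) hvn (smul_nonneg hl.le hw0n) hwn
        (aux_disj_nsmul v w0 hvn hw0n hvw0 n)
    have hw_le : l • w0 ≤ l • e := smul_le_smul_of_nonneg_left inf_le_left hl.le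
    have hsum : l • w0 + v ≤ l • e := by
      rw [aux_add_of_disj _ _ hwv]
      exact sup_le hw_le hv_le
    have hx_eq : l • e - v ≤ x α := by
      have hpn : u - v = x α - l • e := by rw [hu, hv]; exact posPart_sub_negPart _
      have h4 : x α + v = u + l • e := by
        rw [sub_eq_iff_eq_add] at hpn
        rw [hpn]; abel
      rw [sub_le_iff_le_add, h4]
      exact le_add_iff_nonneg_left _ |>.2 hun
    exact le_trans (le_sub_iff_add_le.2 hsum) hx_eq
  constructor
  · -- forward
    rintro ⟨s, hs⟩
    have hs_nonneg : (0:E) ≤ s := le_trans (hx_pos α₀) (hs.1 ⟨α₀, rfl⟩)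
    constructor
    · rintro z ⟨l, hl, rfl⟩
      exact le_trans (hπ_nonneg α₀ l) ((hb l hl).1 ⟨α₀, rfl⟩)
    · intro c hc
      have hnc : ∀ n : ℕ, (n : ℝ) • c ≤ s := by
        intro n
        rcases Nat.eq_zero_or_pos n with h0 | h1
        · simpa [h0] using hs_nonneg
        · have hl : (0:ℝ) < (n:ℝ) := by exact_mod_cast h1
          have hb_le : b (n:ℝ) ≤ (n:ℝ)⁻¹ • s := by
            refine (hb _ hl).2 ?_
            rintro y ⟨α, rfl⟩
            refine (hπ α _).2 ?_
            rintro y ⟨k, rfl⟩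
            have h1' := key1 α (n:ℝ) hl k
            have h2' : (n:ℝ) • (e ⊓ k • (x α - (n:ℝ) • e)⁺) ≤ s :=
              le_trans h1' (hs.1 ⟨α, rfl⟩)
            have h3' := smul_le_smul_of_nonneg_left h2' (inv_nonneg.2 hl.le)
            rwa [inv_smul_smul₀ (ne_of_gt hl)] at h3'
          have hcb : c ≤ (n:ℝ)⁻¹ • s := le_trans (hc ⟨(n:ℝ), hl, rfl⟩) hb_le
          have h4 := smul_le_smul_of_nonneg_left hcb (le_of_lt hl)
          rwa [smul_inv_smul₀ (ne_of_gt hl)] at h4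
      obtain ⟨t, ht⟩ := hDed (Set.range fun n : ℕ => (n : ℝ) • c) ⟨((0:ℕ):ℝ) • c, ⟨0, rfl⟩⟩
        ⟨s, by rintro y ⟨n, rfl⟩; exact hnc n⟩
      have hub : ∀ n : ℕ, (n : ℝ) • c ≤ t - c := by
        intro n
        have h1 : ((n + 1 : ℕ) : ℝ) • c ≤ t := ht.1 ⟨n + 1, rfl⟩
        rw [Nat.cast_add, Nat.cast_one, add_smul, one_smul] at h1
        exact le_sub_iff_add_le.2 h1
      have h5 := ht.2 (by rintro y ⟨n, rfl⟩; exact hub n)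
      have h6 : t + c ≤ t := le_sub_iff_add_le.1 h5
      exact (add_le_iff_nonpos_right t).1 h6
  · -- reverse
    intro hglb
    have hb_le_e : ∀ l : ℝ, 0 < l → b l ≤ e := fun l hl =>
      (hb l hl).2 (by rintro y ⟨α, rfl⟩; exact hπ_le_e α l)
    have hb_nonneg : ∀ l : ℝ, 0 < l → 0 ≤ b l := fun l hl =>
      le_trans (hπ_nonneg α₀ l) ((hb l hl).1 ⟨α₀, rfl⟩)
    have hb_anti : ∀ {l l' : ℝ}, 0 < l → l ≤ l' → b l' ≤ b l := by
      intro l l' hl h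
      refine (hb l' (lt_of_lt_of_le hl h)).2 ?_
      rintro y ⟨α, rfl⟩
      exact le_trans (hπ_anti α h) ((hb l hl).1 ⟨α, rfl⟩)
    -- e - π α l is disjoint from u = (x α - l e)⁺
    have hπ_disj_u : ∀ α (l : ℝ), (e - π α l) ⊓ (x α - l • e)⁺ = 0 := by
      intro α l
      set u := (x α - l • e)⁺ with hu
      set q := π α l with hq
      set w := (e - q) ⊓ u with hw
      have hun : (0:E) ≤ u := posPart_nonneg _
      have hwn : (0:E) ≤ w := le_inf (sub_nonneg.2 (hπ_le_e α l)) hun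
      have hstep : ∀ k : ℕ, e ⊓ k • u ≤ q - w := by
        intro k
        have hk : e ⊓ k • u ≤ q := (hπ α l).1 ⟨k, rfl⟩
        have hw1 : w ≤ e - (e ⊓ k • u) := le_trans inf_le_left (sub_le_sub_left hk e)
        have h1 : e ⊓ k • u + w ≤ e := by
          calc e ⊓ k • u + w ≤ e ⊓ k • u + (e - (e ⊓ k • u)) := add_le_add_right hw1 _
            _ = e := by abel
        have h2 : e ⊓ k • u + w ≤ (k+1) • u := by
          rw [succ_nsmul]
          exact add_le_add inf_le_right inf_le_right
        have h4 : e ⊓ (k+1) • u ≤ q := (hπ α l).1 ⟨k+1, rfl⟩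
        exact le_sub_iff_add_le.2 (le_trans (le_inf h1 h2) h4)
      have h5 : q ≤ q - w := (hπ α l).2 (by rintro y ⟨k, rfl⟩; exact hstep k)
      exact le_antisymm ((add_le_iff_nonpos_right q).1 (le_sub_iff_add_le.1 h5)) hwn
    -- π α l is a component of e
    have hπ_comp : ∀ α (l : ℝ), (e - π α l) ⊓ π α l = 0 := by
      intro α l
      set u := (x α - l • e)⁺ with hu
      set q := π α l with hq
      set w := (e - q) ⊓ q with hw
      have hun : (0:E) ≤ u := posPart_nonneg _
      have hqe : q ≤ e := hπ_le_e α l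
      have hqn : (0:E) ≤ q := hπ_nonneg α l
      have hwn : (0:E) ≤ w := le_inf (sub_nonneg.2 hqe) hqn
      have hdisj : ∀ k : ℕ, (e ⊓ k • u) ⊓ w = 0 := by
        intro k
        have h1 : (e - q) ⊓ (k • u) = 0 :=
          aux_disj_nsmul _ _ (sub_nonneg.2 hqe) hun (hπ_disj_u α l) k
        have h2 : w ⊓ (e ⊓ k • u) = 0 :=
          le_antisymm (le_trans (inf_le_inf inf_le_left inf_le_right) (le_of_eq h1))
            (le_inf hwn (le_inf he_pos (nsmul_nonneg hun k)))
        rw [inf_comm] at h2; exact h2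
      have hstep : ∀ k : ℕ, e ⊓ k • u ≤ q - w := by
        intro k
        have hk : e ⊓ k • u ≤ q := (hπ α l).1 ⟨k, rfl⟩
        have h3 : e ⊓ k • u + w = (e ⊓ k • u) ⊔ w := aux_add_of_disj _ _ (hdisj k)
        have h4 : e ⊓ k • u + w ≤ q := by rw [h3]; exact sup_le hk inf_le_right
        exact le_sub_iff_add_le.2 h4
      have h5 : q ≤ q - w := (hπ α l).2 (by rintro y ⟨k, rfl⟩; exact hstep k)
      exact le_antisymm ((add_le_iff_nonpos_right q).1 (le_sub_iff_add_le.1 h5)) hwn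
    -- b l is a component of e
    have hb_comp : ∀ l : ℝ, 0 < l → (e - b l) ⊓ b l = 0 := by
      intro l hl
      set w := (e - b l) ⊓ b l with hw
      have hwn : (0:E) ≤ w := le_inf (sub_nonneg.2 (hb_le_e l hl)) (hb_nonneg l hl)
      have hstep : ∀ α, π α l ≤ b l - w := by
        intro α
        have h1 : π α l ≤ b l := (hb l hl).1 ⟨α, rfl⟩
        have h2 : w ⊓ π α l = 0 := by
          have h3 : w ⊓ π α l ≤ (e - π α l) ⊓ π α l :=
            inf_le_inf (le_trans inf_le_left (sub_le_sub_left h1 e)) le_rfl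
          exact le_antisymm (le_trans h3 (le_of_eq (hπ_comp α l)))
            (le_inf hwn (hπ_nonneg α l))
        have h4 : π α l + w = π α l ⊔ w := aux_add_of_disj _ _ (by rw [inf_comm]; exact h2)
        have h5 : π α l + w ≤ b l := by rw [h4]; exact sup_le h1 inf_le_right
        exact le_sub_iff_add_le.2 h5
      have h6 : b l ≤ b l - w := (hb l hl).2 (by rintro y ⟨α, rfl⟩; exact hstep α)
      exact le_antisymm ((add_le_iff_nonpos_right _).1 (le_sub_iff_add_le.1 h6)) hwn
    -- the decreasing chain c and its disjoint differences d
    set c : ℕ → E := fun n => if n = 0 then e else b n with hc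
    have hc0 : c 0 = e := by simp [hc]
    have hcs : ∀ n : ℕ, c (n+1) = b ((n+1 : ℕ) : ℝ) := by intro n; simp [hc]
    have hposn : ∀ n : ℕ, (0:ℝ) < ((n+1 : ℕ) : ℝ) := fun n => by exact_mod_cast Nat.succ_pos n
    have hc_le_e : ∀ n, c n ≤ e := by
      intro n
      cases n with
      | zero => rw [hc0]
      | succ m => rw [hcs]; exact hb_le_e _ (hposn m)
    have hc_nonneg : ∀ n, (0:E) ≤ c n := by
      intro n
      cases n with
      | zero => rw [hc0]; exact he_pos
      | succ m => rw [hcs]; exact hb_nonneg _ (hposn m)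
    have hc_comp : ∀ n, (e - c n) ⊓ c n = 0 := by
      intro n
      cases n with
      | zero => rw [hc0, sub_self]; exact inf_eq_left.2 he_pos
      | succ m => rw [hcs]; exact hb_comp _ (hposn m)
    have hc_anti : Antitone c := by
      refine antitone_nat_of_succ_le ?_
      intro n
      cases n with
      | zero => rw [hc0, hcs]; exact hb_le_e _ (hposn 0)
      | succ m =>
        rw [hcs, hcs]
        exact hb_anti (hposn m) (by exact_mod_cast Nat.le_succ (m+1))
    set d : ℕ → E := fun n => c n - c (n+1) with hd
    have hdval : ∀ n, d n = c n - c (n+1) := fun n => by rw [hd]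
    have hd_nonneg : ∀ n, (0:E) ≤ d n := fun n => by
      rw [hdval]; exact sub_nonneg.2 (hc_anti (Nat.le_succ n))
    have hd_le_c : ∀ n, d n ≤ c n := fun n => by
      rw [hdval]; exact sub_le_self _ (hc_nonneg _)
    have hd_le_e : ∀ n, d n ≤ e := fun n => le_trans (hd_le_c n) (hc_le_e n)
    have hdc : ∀ n, d n ⊓ c (n+1) = 0 := by
      intro n
      have h1 : d n ≤ e - c (n+1) := by rw [hdval]; exact sub_le_sub_right (hc_le_e n) _
      exact le_antisymm (le_trans (inf_le_inf_right _ h1) (le_of_eq (hc_comp (n+1))))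
        (le_inf (hd_nonneg n) (hc_nonneg (n+1)))
    have hd_disj_lt : ∀ m n, m < n → d m ⊓ d n = 0 := by
      intro m n h
      have h1 : d n ≤ c (m+1) := le_trans (hd_le_c n) (hc_anti h)
      exact le_antisymm (le_trans (inf_le_inf_left _ h1) (le_of_eq (hdc m)))
        (le_inf (hd_nonneg m) (hd_nonneg n))
    have hd_disj : ∀ m n, m ≠ n → d m ⊓ d n = 0 := by
      intro m n hmn
      rcases lt_or_gt_of_ne hmn with h | h
      · exact hd_disj_lt m n h
      · rw [inf_comm]; exact hd_disj_lt n m h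
    have hd_comp : ∀ n, d n ⊓ (e - d n) = 0 := by
      intro n
      have he1 : e - d n = (e - c n) + c (n+1) := by rw [hdval]; abel
      rw [he1]
      have h2 : c n ⊓ (e - c n) = 0 := by rw [inf_comm]; exact hc_comp n
      refine aux_disj_add _ _ _ (hd_nonneg n) (sub_nonneg.2 (hc_le_e n)) (hc_nonneg (n+1))
        ?_ (hdc n)
      exact le_antisymm (le_trans (inf_le_inf_right _ (hd_le_c n)) (le_of_eq h2))
        (le_inf (hd_nonneg n) (sub_nonneg.2 (hc_le_e n)))
    -- (x α - (n+1) e)⁺ is disjoint from d n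
    have hud : ∀ α n, (x α - ((n+1 : ℕ) : ℝ) • e)⁺ ⊓ d n = 0 := by
      intro α n
      have h1 : π α ((n+1 : ℕ) : ℝ) ≤ c (n+1) := by
        rw [hcs n]; exact (hb _ (hposn n)).1 ⟨α, rfl⟩
      have h2 : π α ((n+1 : ℕ) : ℝ) ⊓ d n = 0 :=
        le_antisymm (le_trans (inf_le_inf_right _ h1) (by rw [inf_comm]; exact le_of_eq (hdc n)))
          (le_inf (hπ_nonneg _ _) (hd_nonneg n))
      set u := (x α - ((n+1 : ℕ) : ℝ) • e)⁺ with hu2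
      have h3 : u ⊓ e ≤ π α ((n+1 : ℕ) : ℝ) := by
        have h4 : e ⊓ ((1:ℕ) • u) ≤ π α ((n+1 : ℕ) : ℝ) := (hπ α _).1 ⟨1, rfl⟩
        rw [one_nsmul] at h4
        rw [inf_comm]
        exact h4
      have hw : u ⊓ d n ⊓ e = 0 := by
        have h5 : u ⊓ d n ⊓ e ≤ π α ((n+1 : ℕ) : ℝ) ⊓ d n :=
          le_inf (le_trans (inf_le_inf_right e inf_le_left) h3)
            (le_trans inf_le_left inf_le_right)
        exact le_antisymm (le_trans h5 (le_of_eq h2))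
          (le_inf (le_inf (posPart_nonneg _) (hd_nonneg n)) he_pos)
      exact he_unit _ (le_inf (posPart_nonneg _) (hd_nonneg n)) hw
    -- lateral completeness gives the candidate upper bound
    obtain ⟨s₀, hs₀⟩ := hLat (Set.range fun n : ℕ => (n+1) • d n)
      (by rintro y ⟨n, rfl⟩; exact nsmul_nonneg (hd_nonneg n) _)
      (by
        rintro y ⟨m, rfl⟩ z ⟨n, rfl⟩ hyz
        have hmn : m ≠ n := by rintro rfl; exact hyz rfl
        have h1 : d m ⊓ d n = 0 := hd_disj m n hmn
        have h2 : ((m+1) • d m) ⊓ d n = 0 := by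
          rw [inf_comm]
          exact aux_disj_nsmul _ _ (hd_nonneg n) (hd_nonneg m)
            (by rw [inf_comm]; exact h1) _
        exact aux_disj_nsmul _ _ (nsmul_nonneg (hd_nonneg m) _) (hd_nonneg n) h2 _)
    -- s₀ is an upper bound of the net
    have hx_le : ∀ α, x α ≤ s₀ := by
      intro α
      set g := (x α - s₀)⁺ with hg
      have hgn : (0:E) ≤ g := posPart_nonneg _
      have hgd : ∀ n, g ⊓ d n = 0 := by
        intro n
        have h1 : (n+1) • d n ≤ s₀ := hs₀.1 ⟨n, rfl⟩
        have h2 : g ≤ (x α - (n+1) • d n)⁺ := posPart_mono (sub_le_sub_left h1 _)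
        set u := (x α - ((n+1 : ℕ) : ℝ) • e)⁺ with hu2
        have h3 : x α - (n+1) • d n = (x α - ((n+1 : ℕ) : ℝ) • e) + (n+1) • (e - d n) := by
          rw [Nat.cast_smul_eq_nsmul ℝ (n+1) e, smul_sub (n+1) e (d n)]; exact (sub_add_sub_cancel (x α) ((n+1) • e) ((n+1) • d n)).symm
        have h4 : x α - (n+1) • d n ≤ u + (n+1) • (e - d n) := by
          rw [h3, hu2]
          exact add_le_add_left (le_posPart _) _
        have hrn : (0:E) ≤ u + (n+1) • (e - d n) :=
          add_nonneg (posPart_nonneg _) (nsmul_nonneg (sub_nonneg.2 (hd_le_e n)) _)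
        have h5 : (x α - (n+1) • d n)⁺ ≤ u + (n+1) • (e - d n) :=
          le_trans (posPart_mono h4) (le_of_eq (posPart_eq_self.2 hrn))
        have h7 : (u + (n+1) • (e - d n)) ⊓ d n = 0 := by
          rw [inf_comm]
          exact aux_disj_add _ _ _ (hd_nonneg n) (posPart_nonneg _)
            (nsmul_nonneg (sub_nonneg.2 (hd_le_e n)) _)
            (by rw [inf_comm]; exact hud α n)
            (aux_disj_nsmul _ _ (hd_nonneg n) (sub_nonneg.2 (hd_le_e n)) (hd_comp n) _)
        have h8 : g ⊓ d n ≤ 0 := by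
          calc g ⊓ d n ≤ (u + (n+1) • (e - d n)) ⊓ d n :=
                inf_le_inf_right _ (le_trans h2 h5)
            _ = 0 := h7
        exact le_antisymm h8 (le_inf hgn (hd_nonneg n))
      have hge_le : ∀ n, g ⊓ e ≤ c n := by
        intro n
        induction n with
        | zero => rw [hc0]; exact inf_le_right
        | succ m ih =>
          have h1 : g ⊓ e ≤ g ⊓ c m := le_inf inf_le_left ih
          have h2 : c m = d m + c (m+1) := by rw [hdval]; abel
          have h3 : g ⊓ c m ≤ g ⊓ d m + g ⊓ c (m+1) := by
            rw [h2]
            exact aux_inf_add_le_s7 g _ _ hgn (hd_nonneg m) (hc_nonneg (m+1))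
          rw [hgd m, zero_add] at h3
          exact le_trans (le_trans h1 h3) inf_le_right
      have hge : g ⊓ e = 0 := by
        have hlb : g ⊓ e ∈ lowerBounds {z : E | ∃ l : ℝ, 0 < l ∧ z = b l} := by
          rintro z ⟨l, hl, rfl⟩
          obtain ⟨n, hn⟩ := exists_nat_ge l
          have h1 : g ⊓ e ≤ c (n+1) := hge_le (n+1)
          rw [hcs n] at h1
          exact le_trans h1 (hb_anti hl (by push_cast; linarith))
        exact le_antisymm (hglb.2 hlb) (le_inf hgn he_pos)
      have hg0 : g = 0 := he_unit g hgn hge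
      have h9 : x α - s₀ ≤ 0 := by
        have := le_posPart (x α - s₀)
        rw [← hg, hg0] at this
        exact this
      exact sub_nonpos.1 h9
    exact hDed (Set.range x) ⟨x α₀, ⟨α₀, rfl⟩⟩
      ⟨s₀, by rintro y ⟨α, rfl⟩; exact hx_le α⟩
end

section
/- Let E be a Dedekind complete vector lattice with weak order unit e which is σ-laterally complete, i.e. every countable family of pairwise disjoint positive elements of E has a supremum in E. Let (x_n)_{n≥1} be an increasing sequence in E⁺. Then sup_n x_n exists in E if and only if inf_{k∈ℕ} sup_n P_{(x_n − ke)^+} e = 0 (each supremum over n exists in E since all terms lie in [0, e]). -/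
/-- `E` is σ-laterally complete: every countable family of pairwise disjoint positive
elements has a supremum. -/
def SigmaLaterallyComplete (E : Type*) [Lattice E] [AddCommGroup E] : Prop :=
  ∀ x : ℕ → E, (∀ n, 0 ≤ x n) → (∀ m n, m ≠ n → x m ⊓ x n = 0) →
    ∃ s, IsLUB (Set.range x) s

set_option linter.unusedSectionVars false

section Helpers
variable {E : Type*} [Lattice E] [AddCommGroup E] [CovariantClass E E (· + ·) (· ≤ ·)]

/-- Riesz-type inequality. -/
lemma aux_riesz {a b c : E} (ha : 0 ≤ a) (hb : 0 ≤ b) (hc : 0 ≤ c) :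
    (a + b) ⊓ c ≤ a ⊓ c + b ⊓ c := by
  have h1 : (a + b) ⊓ c ≤ a ⊓ c + b := by
    have h2 : (a + b) ⊓ c ≤ (a + b) ⊓ (c + b) := inf_le_inf_left _ (le_add_of_nonneg_right hb)
    calc (a + b) ⊓ c ≤ (a + b) ⊓ (c + b) := h2
      _ = a ⊓ c + b := by rw [← inf_add]
  have h3 : (a + b) ⊓ c - (a ⊓ c) ≤ b := sub_le_iff_le_add'.mpr h1
  have h4 : (a + b) ⊓ c - (a ⊓ c) ≤ c :=
    le_trans (sub_le_self _ (le_inf ha hc)) inf_le_right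
  exact sub_le_iff_le_add'.mp (le_inf h3 h4)

lemma aux_nsmul_disjoint {a b : E} (ha : 0 ≤ a) (hb : 0 ≤ b) (h : a ⊓ b = 0) :
    ∀ m : ℕ, (m • a) ⊓ b = 0 := by
  intro m
  induction m with
  | zero => simpa using inf_eq_right.mpr hb
  | succ m ih =>
    refine le_antisymm ?_ (le_inf (nsmul_nonneg ha _) hb)
    calc (m + 1) • a ⊓ b = (m • a + a) ⊓ b := by rw [succ_nsmul]
      _ ≤ m • a ⊓ b + a ⊓ b := aux_riesz (nsmul_nonneg ha m) ha hb
      _ = 0 := by rw [ih, h, add_zero]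

lemma aux_lub_inf {ι : Type*} {y : ι → E} {s r u : E} (h : IsLUB (Set.range y) s)
    (hu : ∀ i, r ⊓ y i ≤ u) : r ⊓ s ≤ u := by
  have key : ∀ i, y i ≤ u + (r ⊔ s) - r := by
    intro i
    have h1 : r + y i - (r ⊔ y i) ≤ u := by
      have h0 := inf_add_sup r (y i)
      have h2 : r ⊓ y i = r + y i - (r ⊔ y i) := by rw [← h0]; abel
      rw [← h2]; exact hu i
    have h3 : r ⊔ y i ≤ r ⊔ s := sup_le_sup_left (h.1 ⟨i, rfl⟩) r
    have h4 : r + y i ≤ u + (r ⊔ y i) := sub_le_iff_le_add.mp h1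
    have h5 : r + y i ≤ u + (r ⊔ s) := h4.trans (add_le_add_right h3 u)
    exact le_sub_iff_add_le'.mpr h5
  have hs : s ≤ u + (r ⊔ s) - r := h.2 (by rintro _ ⟨i, rfl⟩; exact key i)
  have h5 : r ⊓ s = r + s - (r ⊔ s) := by rw [← inf_add_sup r s]; abel
  rw [h5]
  have h6 : r + s ≤ u + (r ⊔ s) := by
    have h7 := add_le_add_right hs r
    calc r + s ≤ r + (u + (r ⊔ s) - r) := h7
      _ = u + (r ⊔ s) := by abel
  exact sub_le_iff_le_add.mpr h6

lemma aux_lub_mono {ι : Type*} {f g : ι → E} {a c : E} (hf : IsLUB (Set.range f) a)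
    (hg : IsLUB (Set.range g) c) (h : ∀ i, f i ≤ g i) : a ≤ c :=
  hf.2 (by rintro _ ⟨i, rfl⟩; exact (h i).trans (hg.1 ⟨i, rfl⟩))

lemma aux_arch (hDed : ∀ S : Set E, S.Nonempty → BddAbove S → ∃ s, IsLUB S s)
    {d s : E} (hd : 0 ≤ d) (h : ∀ k : ℕ, k • d ≤ s) : d = 0 := by
  obtain ⟨t, ht⟩ := hDed (Set.range fun k : ℕ => k • d) ⟨0, ⟨0, by simp⟩⟩
    ⟨s, by rintro _ ⟨k, rfl⟩; exact h k⟩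
  have hub : t ≤ t - d := ht.2 (by
    rintro _ ⟨k, rfl⟩
    have h1 : (k + 1) • d ≤ t := ht.1 ⟨k + 1, rfl⟩
    have h2 : k • d + d ≤ t := by rwa [← succ_nsmul]
    exact le_sub_iff_add_le.mpr h2)
  have h6 : t + d ≤ t := le_sub_iff_add_le.mp hub
  exact le_antisymm ((add_le_iff_nonpos_right t).mp h6) hd

/-- `(k•e) ⊓ (m • (y - k•e)⁺) ≤ y` for `y ≥ 0`. -/
lemma aux_key {e y : E} (he : 0 ≤ e) (hy : 0 ≤ y) (k m : ℕ) :
    (k • e) ⊓ (m • (y - k • e)⁺) ≤ y := by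
  set a := k • e with ha_def
  have ha : 0 ≤ a := nsmul_nonneg he k
  set u := (y - a)⁺
  set v := (y - a)⁻
  have huv : u - v = y - a := posPart_sub_negPart _
  set w := a ⊓ m • u with hw_def
  have hw0 : 0 ≤ w := le_inf ha (nsmul_nonneg (posPart_nonneg _) m)
  have h1 : w - y ≤ v := by
    have he1 : w - y = (w - a) - (u - v) := by rw [huv]; abel
    rw [he1]
    have h2 : w - a ≤ 0 := sub_nonpos.mpr inf_le_left
    have h3 : -(u - v) ≤ v := by
      have hu0 : (0:E) ≤ u := posPart_nonneg _
      have h4 : -(u - v) = v - u := by abel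
      rw [h4]; exact sub_le_self _ hu0
    calc (w - a) - (u - v) ≤ 0 + -(u - v) := by
          have h5 := add_le_add_left h2 (-(u - v)); simpa [sub_eq_add_neg] using h5
      _ ≤ 0 + v := add_le_add_right h3 0
      _ = v := by simp
  have h2 : w - y ≤ w := sub_le_self _ hy
  have h3 : w ⊓ v = 0 := by
    have hd : u ⊓ v = 0 := posPart_inf_negPart_eq_zero _
    have h4 := aux_nsmul_disjoint (posPart_nonneg _) (negPart_nonneg _) hd m
    refine le_antisymm ?_ (le_inf hw0 (negPart_nonneg _))
    calc w ⊓ v ≤ (m • u) ⊓ v := inf_le_inf_right v inf_le_right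
      _ = 0 := h4
  have h7 : w - y ≤ 0 := by rw [← h3]; exact le_inf h2 h1
  exact sub_nonpos.mp h7

end Helpers

/-- Theorem. Let `E` be a Dedekind complete, σ-laterally complete vector lattice with
weak order unit `e`, and let `(x_n)_{n ≥ 1}` be an increasing sequence in `E⁺`.  For
`u ∈ E⁺`, `P_u` denotes the band projection onto the band generated by `u`, given by
`P_u z = sup_j (z ⊓ j u)`; here `π n k = P_{(x_n - k e)⁺} e` and
`b k = sup_n P_{(x_n - k e)⁺} e` (these suprema exist since all terms lie in `[0, e]`).
Then `sup_n x_n` exists in `E` if and only if `inf_{k ∈ ℕ} b k = 0`. -/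
theorem sup_exists_iff_inf_band_projections_zero_sequential
    {E : Type*} [Lattice E] [AddCommGroup E] [Module ℝ E]
    [CovariantClass E E (· + ·) (· ≤ ·)] [PosSMulMono ℝ E]
    (hDed : DedekindComplete E) (hLat : SigmaLaterallyComplete E)
    (e : E) (he_pos : 0 ≤ e) (he_unit : ∀ x : E, 0 ≤ x → x ⊓ e = 0 → x = 0)
    (x : ℕ → E) (hx_pos : ∀ n, 0 ≤ x n) (hx_mono : Monotone x)
    (π : ℕ → ℕ → E)
    (hπ : ∀ n k : ℕ,
      IsLUB (Set.range fun j : ℕ => e ⊓ (j • (x n - k • e)⁺)) (π n k))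
    (b : ℕ → E)
    (hb : ∀ k : ℕ, IsLUB (Set.range fun n => π n k) (b k)) :
    (∃ s, IsLUB (Set.range x) s) ↔ IsGLB (Set.range b) 0 := by
  -- basic facts about π
  have pi_nonneg : ∀ n k, 0 ≤ π n k := by
    intro n k
    have h := (hπ n k).1 ⟨0, rfl⟩
    simpa [inf_eq_right.mpr he_pos] using h
  have pi_le_e : ∀ n k, π n k ≤ e := fun n k =>
    (hπ n k).2 (by rintro _ ⟨j, rfl⟩; exact inf_le_left)
  have pi_le : ∀ {n n' k k' : ℕ}, n ≤ n' → k' ≤ k → π n k ≤ π n' k' := by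
    intro n n' k k' hn hk
    refine aux_lub_mono (hπ n k) (hπ n' k') (fun j => inf_le_inf_left e ?_)
    exact nsmul_le_nsmul_right
      (posPart_mono (sub_le_sub (hx_mono hn) (nsmul_le_nsmul_left he_pos hk))) j
  have b_nonneg : ∀ k, 0 ≤ b k := fun k => le_trans (pi_nonneg 0 k) ((hb k).1 ⟨0, rfl⟩)
  have b_le_e : ∀ k, b k ≤ e := fun k => (hb k).2 (by rintro _ ⟨n, rfl⟩; exact pi_le_e n k)
  have b_anti : ∀ k, b (k+1) ≤ b k := fun k =>
    aux_lub_mono (hb (k+1)) (hb k) (fun n => pi_le le_rfl (Nat.le_succ k))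
  have b_antitone : Antitone b := antitone_nat_of_succ_le b_anti
  -- π n k is a component of e
  have pi_comp : ∀ n k, π n k ⊓ (e - π n k) = 0 := by
    intro n k
    set u := (x n - k • e)⁺ with hu
    have hu0 : 0 ≤ u := posPart_nonneg _
    have hP := hπ n k
    set r := π n k ⊓ (e - π n k) with hr
    have hr0 : 0 ≤ r := le_inf (pi_nonneg n k) (sub_nonneg.mpr (pi_le_e n k))
    set a := r ⊓ u with haa
    have ha0 : 0 ≤ a := le_inf hr0 hu0
    have hgen : ∀ j : ℕ, e ⊓ j • u ≤ e - r := by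
      intro j
      have h1 : r ≤ e - (e ⊓ j • u) :=
        le_trans inf_le_right (sub_le_sub_left (hP.1 ⟨j, rfl⟩) e)
      exact le_sub_comm.mp h1
    have hja : ∀ j : ℕ, j • a ≤ e := by
      intro j
      induction j with
      | zero => simpa using he_pos
      | succ j ih =>
        have h1 : j • a ≤ (j • u) ⊓ e :=
          le_inf (nsmul_le_nsmul_right inf_le_right j) ih
        have h2 : (j • u) ⊓ e ≤ e - r := by rw [inf_comm]; exact hgen j
        have h3 : j • a ≤ e - a :=
          le_trans h1 (h2.trans (sub_le_sub_left inf_le_left e))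
        rw [succ_nsmul]
        exact le_sub_iff_add_le.mp h3
    have ha : a = 0 := aux_arch hDed ha0 hja
    have hrg : ∀ j : ℕ, r ⊓ (e ⊓ j • u) ≤ (0:E) := by
      intro j
      have h1 : (j • u) ⊓ r = 0 :=
        aux_nsmul_disjoint hu0 hr0 (by rw [inf_comm]; exact ha) j
      calc r ⊓ (e ⊓ j • u) ≤ r ⊓ (j • u) := inf_le_inf_left r inf_le_right
        _ = (j • u) ⊓ r := inf_comm _ _
        _ = 0 := h1
    have h2 : r ⊓ π n k ≤ 0 := aux_lub_inf hP hrg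
    have h3 : r ≤ π n k := inf_le_left
    have h4 : r ≤ 0 := by rwa [inf_eq_left.mpr h3] at h2
    exact le_antisymm h4 hr0
  -- b k is a component of e
  have b_comp : ∀ k, b k ⊓ (e - b k) = 0 := by
    intro k
    set t := b k ⊓ (e - b k) with ht
    have ht0 : 0 ≤ t := le_inf (b_nonneg k) (sub_nonneg.mpr (b_le_e k))
    have hgen : ∀ n, t ⊓ π n k ≤ (0:E) := by
      intro n
      calc t ⊓ π n k ≤ (e - π n k) ⊓ π n k :=
            inf_le_inf_right _ (le_trans inf_le_right (sub_le_sub_left ((hb k).1 ⟨n, rfl⟩) e))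
        _ = π n k ⊓ (e - π n k) := inf_comm _ _
        _ = 0 := pi_comp n k
    have h1 : t ⊓ b k ≤ 0 := aux_lub_inf (hb k) hgen
    have h2 : t ≤ b k := inf_le_left
    exact le_antisymm (by rwa [inf_eq_left.mpr h2] at h1) ht0
  constructor
  · -- forward direction
    rintro ⟨s, hs⟩
    have hs0 : 0 ≤ s := le_trans (hx_pos 0) (hs.1 ⟨0, rfl⟩)
    constructor
    · rintro _ ⟨k, rfl⟩; exact b_nonneg k
    · intro d hd
      set d' := d ⊔ 0 with hd'
      have hd'0 : 0 ≤ d' := le_sup_right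
      have hdb : ∀ k, d' ≤ b k := fun k => sup_le (hd ⟨k, rfl⟩) (b_nonneg k)
      have hkd : ∀ k : ℕ, k • d' ≤ s := by
        intro k
        rcases Nat.eq_zero_or_pos k with hk | hk
        · subst hk; simpa using hs0
        · have hbk : b k ≤ ((k : ℝ)⁻¹) • s := by
            refine (hb k).2 ?_
            rintro _ ⟨n, rfl⟩
            refine (hπ n k).2 ?_
            rintro _ ⟨j, rfl⟩
            have hks : k • (e ⊓ j • (x n - k • e)⁺) ≤ s := by
              have h1 : k • (e ⊓ j • (x n - k • e)⁺) ≤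
                  (k • e) ⊓ (k • (j • (x n - k • e)⁺)) :=
                le_inf (nsmul_le_nsmul_right inf_le_left k)
                  (nsmul_le_nsmul_right inf_le_right k)
              have h2 : k • (j • (x n - k • e)⁺) = (k * j) • (x n - k • e)⁺ := smul_smul k j _
              rw [h2] at h1
              exact h1.trans ((aux_key he_pos (hx_pos n) k (k*j)).trans (hs.1 ⟨n, rfl⟩))
            have hcast : ((k:ℝ)) • (e ⊓ j • (x n - k • e)⁺) = k • (e ⊓ j • (x n - k • e)⁺) :=
              Nat.cast_smul_eq_nsmul ℝ k _
            have h3 : ((k:ℝ)) • (e ⊓ j • (x n - k • e)⁺) ≤ s := by rw [hcast]; exact hks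
            have h4 := smul_le_smul_of_nonneg_left h3 (by positivity : (0:ℝ) ≤ (k:ℝ)⁻¹)
            rwa [smul_smul, inv_mul_cancel₀ (by exact_mod_cast hk.ne' : (k:ℝ) ≠ 0),
              one_smul] at h4
          have h5 : (k:ℝ) • d' ≤ (k:ℝ) • (((k:ℝ)⁻¹) • s) :=
            smul_le_smul_of_nonneg_left ((hdb k).trans hbk) (by positivity)
          rw [smul_smul, mul_inv_cancel₀ (by exact_mod_cast hk.ne' : (k:ℝ) ≠ 0),
            one_smul] at h5
          rwa [Nat.cast_smul_eq_nsmul] at h5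
      have hzero := aux_arch hDed hd'0 hkd
      calc d ≤ d' := le_sup_left
        _ = 0 := hzero
  · -- backward direction
    intro hglb
    set c : ℕ → E := fun k => b k - b (k+1) with hc
    have hc0 : ∀ k, 0 ≤ c k := fun k => sub_nonneg.mpr (b_anti k)
    have hce : ∀ k, c k ≤ e := fun k => le_trans (sub_le_self _ (b_nonneg _)) (b_le_e k)
    have hcb : ∀ k, c k ⊓ b (k+1) = 0 := by
      intro k
      refine le_antisymm ?_ (le_inf (hc0 k) (b_nonneg _))
      calc c k ⊓ b (k+1) ≤ (e - b (k+1)) ⊓ b (k+1) :=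
            inf_le_inf_right _ (sub_le_sub_right (b_le_e k) _)
        _ = b (k+1) ⊓ (e - b (k+1)) := inf_comm _ _
        _ = 0 := b_comp (k+1)
    have hcc : ∀ {k l : ℕ}, k < l → c k ⊓ c l = 0 := by
      intro k l hkl
      refine le_antisymm ?_ (le_inf (hc0 k) (hc0 l))
      calc c k ⊓ c l ≤ c k ⊓ b (k+1) :=
            inf_le_inf_left _ ((sub_le_self _ (b_nonneg _)).trans (b_antitone hkl))
        _ = 0 := hcb k
    have hdisj : ∀ m n : ℕ, m ≠ n → ((m+2) • c m) ⊓ ((n+2) • c n) = 0 := by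
      have key : ∀ m n : ℕ, m < n → ((m+2) • c m) ⊓ ((n+2) • c n) = 0 := by
        intro m n h
        have h1 : c n ⊓ ((m+2) • c m) = 0 := by
          rw [inf_comm]
          exact aux_nsmul_disjoint (hc0 m) (hc0 n) (hcc h) (m+2)
        have h2 := aux_nsmul_disjoint (hc0 n) (nsmul_nonneg (hc0 m) (m+2)) h1 (n+2)
        rw [inf_comm]; exact h2
      intro m n h
      rcases h.lt_or_gt with h' | h'
      · exact key m n h'
      · rw [inf_comm]; exact key n m h'
    obtain ⟨w, hw⟩ := hLat (fun k => (k+2) • c k) (fun k => nsmul_nonneg (hc0 k) _) hdisj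
    have hw0 : 0 ≤ w := le_trans (nsmul_nonneg (hc0 0) 2) (hw.1 ⟨0, rfl⟩)
    have hwk : ∀ k, (k+2) • c k ≤ w := fun k => hw.1 ⟨k, rfl⟩
    have hbound : ∀ n, x n ≤ w + e := by
      intro n
      set y := (x n - (w + e))⁺ with hy
      set v := (x n - (w + e))⁻ with hv
      set z := y ⊓ e with hz
      have hz0 : 0 ≤ z := le_inf (posPart_nonneg _) he_pos
      have hzy : z ≤ y := inf_le_left
      have hze : z ≤ e := inf_le_right
      have hzx : z ≤ x n := hzy.trans (by
        calc y ≤ (x n)⁺ := posPart_mono (sub_le_self _ (add_nonneg hw0 he_pos))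
          _ = x n := posPart_eq_self.mpr (hx_pos n))
      have hzpi0 : z ≤ π n 0 := by
        have hgen := (hπ n 0).1 ⟨1, rfl⟩
        have heq : e ⊓ (1 • (x n - 0 • e)⁺) = e ⊓ x n := by
          simp [posPart_eq_self.mpr (hx_pos n)]
        calc z ≤ e ⊓ x n := le_inf hze hzx
          _ = e ⊓ (1 • (x n - 0 • e)⁺) := heq.symm
          _ ≤ π n 0 := hgen
      have hstepB : ∀ k, z ⊓ c k = 0 := by
        intro k
        set q := z ⊓ c k with hq
        have hq0 : 0 ≤ q := le_inf hz0 (hc0 k)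
        have hqc : q ≤ c k := inf_le_right
        have hqz : q ≤ z := inf_le_left
        have hccomp : c k ⊓ (e - c k) = 0 := by
          have hsplit : e - c k = (e - b k) + b (k+1) := by rw [hc]; beta_reduce; abel
          refine le_antisymm ?_ (le_inf (hc0 k) (sub_nonneg.mpr (hce k)))
          calc c k ⊓ (e - c k) = ((e - b k) + b (k+1)) ⊓ c k := by rw [hsplit, inf_comm]
            _ ≤ (e - b k) ⊓ c k + b (k+1) ⊓ c k :=
              aux_riesz (sub_nonneg.mpr (b_le_e k)) (b_nonneg _) (hc0 k)
            _ ≤ (e - b k) ⊓ b k + b (k+1) ⊓ c k := by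
              exact add_le_add_left (inf_le_inf_left _ (sub_le_self _ (b_nonneg _))) _
            _ = 0 + b (k+1) ⊓ c k := by rw [inf_comm (e - b k), b_comp k]
            _ = 0 := by rw [inf_comm (b (k+1)), hcb k, add_zero]
        have hqec : q ⊓ (e - c k) = 0 :=
          le_antisymm (le_trans (inf_le_inf_right _ hqc) hccomp.le)
            (le_inf hq0 (sub_nonneg.mpr (hce k)))
        have hqv : q ⊓ v = 0 := by
          refine le_antisymm ?_ (le_inf hq0 (negPart_nonneg _))
          calc q ⊓ v ≤ y ⊓ v := inf_le_inf_right _ (hqz.trans hzy)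
            _ = 0 := posPart_inf_negPart_eq_zero _
        set u := (x n - (k+1) • e)⁺ with hu
        have hqu : q ≤ u := by
          rw [← sub_nonpos]
          have h1 : q - u ≤ q := sub_le_self _ (posPart_nonneg _)
          have h2 : q - u ≤ v + k • (e - c k) := by
            have ha1 : x n - (k+1) • e ≤ u := le_posPart _
            have ha2 : q ≤ (x n - (w + e)) + v := by
              refine (hqz.trans hzy).trans ?_
              have := posPart_sub_negPart (x n - (w + e))
              rw [← hy, ← hv] at this
              exact le_of_eq (eq_add_of_sub_eq this)
            have h3 : q - u ≤ v + (k • e - w) := by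
              calc q - u ≤ q - (x n - (k+1) • e) := sub_le_sub_left ha1 q
                _ ≤ ((x n - (w + e)) + v) - (x n - (k+1) • e) := sub_le_sub_right ha2 _
                _ = v + (k • e - w) := by rw [succ_nsmul]; abel
            have h4 : k • e - w ≤ k • (e - c k) := by
              have h5 : k • e - w ≤ k • e - (k+2) • c k := sub_le_sub_left (hwk k) _
              calc k • e - w ≤ k • e - (k+2) • c k := h5
                _ = k • (e - c k) - 2 • c k := by
                  rw [add_nsmul, sub_add_eq_sub_sub, ← nsmul_sub]
                _ ≤ k • (e - c k) := sub_le_self _ (nsmul_nonneg (hc0 k) 2)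
            calc q - u ≤ v + (k • e - w) := h3
              _ ≤ v + k • (e - c k) := add_le_add_right h4 v
          have h6 : q - u ≤ q ⊓ (v + k • (e - c k)) := le_inf h1 h2
          have h7 : q ⊓ (v + k • (e - c k)) ≤ 0 := by
            have h8 : (k • (e - c k)) ⊓ q = 0 :=
              aux_nsmul_disjoint (sub_nonneg.mpr (hce k)) hq0
                (by rw [inf_comm]; exact hqec) k
            calc q ⊓ (v + k • (e - c k)) = (v + k • (e - c k)) ⊓ q := inf_comm _ _
              _ ≤ v ⊓ q + (k • (e - c k)) ⊓ q :=
                aux_riesz (negPart_nonneg _) (nsmul_nonneg (sub_nonneg.mpr (hce k)) k) hq0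
              _ = 0 := by rw [inf_comm v q, hqv, h8, add_zero]
          exact h6.trans h7
        have hqb : q ≤ b (k+1) := by
          have hgen := (hπ n (k+1)).1 ⟨1, rfl⟩
          have heq : e ⊓ (1 • (x n - (k+1) • e)⁺) = e ⊓ u := by rw [one_nsmul]
          calc q ≤ e ⊓ u := le_inf (hqz.trans hze) hqu
            _ = e ⊓ (1 • (x n - (k+1) • e)⁺) := heq.symm
            _ ≤ π n (k+1) := hgen
            _ ≤ b (k+1) := (hb (k+1)).1 ⟨n, rfl⟩
        have hfin : q ≤ 0 := by
          calc q ≤ c k ⊓ b (k+1) := le_inf hqc hqb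
            _ = 0 := hcb k
        exact le_antisymm hfin hq0
      have hstepC : ∀ k, z ⊓ (e - b k) = 0 := by
        intro k
        induction k with
        | zero =>
          refine le_antisymm ?_ (le_inf hz0 (sub_nonneg.mpr (b_le_e 0)))
          calc z ⊓ (e - b 0) ≤ b 0 ⊓ (e - b 0) :=
                inf_le_inf_right _ (hzpi0.trans ((hb 0).1 ⟨n, rfl⟩))
            _ = 0 := b_comp 0
        | succ k ih =>
          have hsplit : e - b (k+1) = (e - b k) + c k := by rw [hc]; beta_reduce; abel
          refine le_antisymm ?_ (le_inf hz0 (sub_nonneg.mpr (b_le_e _)))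
          calc z ⊓ (e - b (k+1)) = ((e - b k) + c k) ⊓ z := by rw [hsplit, inf_comm]
            _ ≤ (e - b k) ⊓ z + c k ⊓ z :=
              aux_riesz (sub_nonneg.mpr (b_le_e k)) (hc0 k) hz0
            _ = 0 := by rw [inf_comm _ z, ih, inf_comm _ z, hstepB k, add_zero]
      have hzb : ∀ k, z ≤ b k := by
        intro k
        have hsplit : (b k + (e - b k)) = e := by abel
        calc z = z ⊓ e := (inf_eq_left.mpr hze).symm
          _ = (b k + (e - b k)) ⊓ z := by rw [hsplit, inf_comm]
          _ ≤ b k ⊓ z + (e - b k) ⊓ z :=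
            aux_riesz (b_nonneg k) (sub_nonneg.mpr (b_le_e k)) hz0
          _ ≤ b k + 0 := add_le_add inf_le_left (by rw [inf_comm]; exact (hstepC k).le)
          _ = b k := add_zero _
      have hz_zero : z = 0 :=
        le_antisymm (hglb.2 (by rintro _ ⟨k, rfl⟩; exact hzb k)) hz0
      have hy_zero : y = 0 := he_unit y (posPart_nonneg _) hz_zero
      have hfin : x n - (w + e) ≤ 0 := by
        calc x n - (w + e) ≤ y := le_posPart _
          _ = 0 := hy_zero
      exact sub_nonpos.mp hfin
    exact hDed (Set.range x) ⟨x 0, ⟨0, rfl⟩⟩ ⟨w + e, by rintro _ ⟨n, rfl⟩; exact hbound n⟩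
end
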